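/- If A and B are output types, then the product type A ∧ B = ∀X((A → (B → X)) → X), the disjoint sum type A ∨ B = ∀X((A → X) → ((B → X) → X)), and the list type LA = ∀X(X → ((A → (X → X)) → X)) are output types. -/

import Mathlib

/-!
Common development: pure λ-calculus in de Bruijn notation, β-reduction,
weak head reduction, types of system F (with type constants), the typing
systems F, F₀ (F without (∀e)) and the simple system S, saturated sets and
interpretations, and the notions of input / output / data types, following
Farkh-Nour, "Les types de données syntaxiques du système F".
-/

namespace FarkhNour

/-- Pure λ-terms, in de Bruijn notation. -/
inductive Trm : Type
  | var : ℕ → Trm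
  | app : Trm → Trm → Trm
  | lam : Trm → Trm

/-- Lift (shift) by `d` the free variables of a term, starting at index `k`. -/
def liftTrm (d : ℕ) : ℕ → Trm → Trm
  | k, .var n => if n < k then .var n else .var (n + d)
  | k, .app a b => .app (liftTrm d k a) (liftTrm d k b)
  | k, .lam a => .lam (liftTrm d (k + 1) a)

/-- β-substitution `t[u/k]` (the binder for `k` is consumed: variables above `k`
are decremented), as used in the β-reduction rule. -/
def substTrm : Trm → ℕ → Trm → Trm
  | .var n, k, u => if n < k then .var n else if n = k then liftTrm k 0 u else .var (n - 1)
  | .app a b, k, u => .app (substTrm a k u) (substTrm b k u)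
  | .lam a, k, u => .lam (substTrm a (k + 1) u)

/-- Named-style capture-avoiding substitution `t[u/x]` of the term `u` for the
free variable `x` of `t` : the other free variables are left unchanged. -/
def replaceVar : Trm → ℕ → Trm → Trm
  | .var n, k, u => if n = k then u else .var n
  | .app a b, k, u => .app (replaceVar a k u) (replaceVar b k u)
  | .lam a, k, u => .lam (replaceVar a (k + 1) (liftTrm 1 0 u))

/-- Lifting of a parallel substitution under a binder. -/
def liftSub (σ : ℕ → Trm) : ℕ → Trm
  | 0 => .var 0
  | n + 1 => liftTrm 1 0 (σ n)

/-- Simultaneous (parallel) capture-avoiding substitution. -/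
def msubst (σ : ℕ → Trm) : Trm → Trm
  | .var n => σ n
  | .app a b => .app (msubst σ a) (msubst σ b)
  | .lam a => .lam (msubst (liftSub σ) a)

/-- One step of β-reduction. -/
inductive BetaStep : Trm → Trm → Prop
  | beta (t u : Trm) : BetaStep (.app (.lam t) u) (substTrm t 0 u)
  | appL {t t' : Trm} (u : Trm) : BetaStep t t' → BetaStep (.app t u) (.app t' u)
  | appR (t : Trm) {u u' : Trm} : BetaStep u u' → BetaStep (.app t u) (.app t u')
  | lam {t t' : Trm} : BetaStep t t' → BetaStep (.lam t) (.lam t')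

/-- Many-step β-reduction `t →β t'`. -/
def BetaRed : Trm → Trm → Prop := Relation.ReflTransGen BetaStep

/-- β-equivalence `t ≃β t'`. -/
def BetaEq : Trm → Trm → Prop := Relation.EqvGen BetaStep

/-- A term is normal iff no β-reduction step applies to it. -/
def IsNormal (t : Trm) : Prop := ∀ u, ¬ BetaStep t u

/-- `FreeIn k t` : the variable (de Bruijn index) `k` occurs free in `t`. -/
def FreeIn : ℕ → Trm → Prop
  | k, .var n => n = k
  | k, .app a b => FreeIn k a ∨ FreeIn k b
  | k, .lam a => FreeIn (k + 1) a

/-- A closed term. -/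
def TrmClosed (t : Trm) : Prop := ∀ k, ¬ FreeIn k t

/-- One step of weak head reduction. -/
inductive WHStep : Trm → Trm → Prop
  | beta (t u : Trm) : WHStep (.app (.lam t) u) (substTrm t 0 u)
  | app {t t' : Trm} (u : Trm) : WHStep t t' → WHStep (.app t u) (.app t' u)

/-- Weak head reduction `t ≻_f t'`. -/
def WHRed : Trm → Trm → Prop := Relation.ReflTransGen WHStep

/-- Types of system F, in de Bruijn notation, with type constants
(the constant `0` is the distinguished constant `O`, the constant `1` is `⊥`). -/
inductive Ty : Type
  | var : ℕ → Ty
  | const : ℕ → Ty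
  | arr : Ty → Ty → Ty
  | all : Ty → Ty

/-- The distinguished type constant `O`. -/
def tyO : Ty := .const 0

/-- The distinguished type constant `⊥`. -/
def tyBot : Ty := .const 1

/-- Lift (shift) by `d` the free type variables, starting at index `k`. -/
def liftTy (d : ℕ) : ℕ → Ty → Ty
  | k, .var n => if n < k then .var n else .var (n + d)
  | _, .const c => .const c
  | k, .arr a b => .arr (liftTy d k a) (liftTy d k b)
  | k, .all a => .all (liftTy d (k + 1) a)

/-- Capture-avoiding type substitution `A[G/k]`. -/
def substTy : Ty → ℕ → Ty → Ty
  | .var n, k, G => if n < k then .var n else if n = k then liftTy k 0 G else .var (n - 1)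
  | .const c, _, _ => .const c
  | .arr a b, k, G => .arr (substTy a k G) (substTy b k G)
  | .all a, k, G => .all (substTy a (k + 1) G)

/-- `TyFreeIn k A` : the type variable `k` occurs free in `A`. -/
def TyFreeIn : ℕ → Ty → Prop
  | k, .var n => n = k
  | _, .const _ => False
  | k, .arr a b => TyFreeIn k a ∨ TyFreeIn k b
  | k, .all a => TyFreeIn (k + 1) a

/-- Boolean version of `TyFreeIn`. -/
def tyFreeInB : ℕ → Ty → Bool
  | k, .var n => n == k
  | _, .const _ => false
  | k, .arr a b => tyFreeInB k a || tyFreeInB k b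
  | k, .all a => tyFreeInB (k + 1) a

/-- A closed type. -/
def TyClosed (A : Ty) : Prop := ∀ k, ¬ TyFreeIn k A

/-- `ContainsConst c A` : the type constant `c` occurs in `A`. -/
def ContainsConst : ℕ → Ty → Prop
  | _, .var _ => False
  | c, .const c' => c' = c
  | c, .arr a b => ContainsConst c a ∨ ContainsConst c b
  | c, .all a => ContainsConst c a

/-- The typing judgment `Γ ⊢_F t : A` of system F, with rules
(ax), (→i), (→e), (∀i), (∀e). -/
inductive TypF : List Ty → Trm → Ty → Prop
  | var (Γ : List Ty) (n : ℕ) (A : Ty) : Γ[n]? = some A → TypF Γ (.var n) A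
  | abs {Γ : List Ty} {t : Trm} {B C : Ty} :
      TypF (B :: Γ) t C → TypF Γ (.lam t) (.arr B C)
  | app {Γ : List Ty} {u v : Trm} {B C : Ty} :
      TypF Γ u (.arr B C) → TypF Γ v B → TypF Γ (.app u v) C
  | allI {Γ : List Ty} {t : Trm} {A : Ty} :
      TypF (Γ.map (liftTy 1 0)) t A → TypF Γ t (.all A)
  | allE {Γ : List Ty} {t : Trm} {A : Ty} (G : Ty) :
      TypF Γ t (.all A) → TypF Γ t (substTy A 0 G)

/-- The typing judgment `Γ ⊢_{F₀} t : A` of system F₀, i.e. system F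
without the rule (∀e). -/
inductive TypF0 : List Ty → Trm → Ty → Prop
  | var (Γ : List Ty) (n : ℕ) (A : Ty) : Γ[n]? = some A → TypF0 Γ (.var n) A
  | abs {Γ : List Ty} {t : Trm} {B C : Ty} :
      TypF0 (B :: Γ) t C → TypF0 Γ (.lam t) (.arr B C)
  | app {Γ : List Ty} {u v : Trm} {B C : Ty} :
      TypF0 Γ u (.arr B C) → TypF0 Γ v B → TypF0 Γ (.app u v) C
  | allI {Γ : List Ty} {t : Trm} {A : Ty} :
      TypF0 (Γ.map (liftTy 1 0)) t A → TypF0 Γ t (.all A)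

/-- The typing judgment `Γ ⊢_S t : A` of the simple type system S,
with rules (ax), (→i), (→e) only. -/
inductive TypS : List Ty → Trm → Ty → Prop
  | var (Γ : List Ty) (n : ℕ) (A : Ty) : Γ[n]? = some A → TypS Γ (.var n) A
  | abs {Γ : List Ty} {t : Trm} {B C : Ty} :
      TypS (B :: Γ) t C → TypS Γ (.lam t) (.arr B C)
  | app {Γ : List Ty} {u v : Trm} {B C : Ty} :
      TypS Γ u (.arr B C) → TypS Γ v B → TypS Γ (.app u v) C

/-- Quantifier-free types (types of the simple type system S). -/
def QFree : Ty → Prop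
  | .var _ => True
  | .const _ => True
  | .arr a b => QFree a ∧ QFree b
  | .all _ => False

/-- An input type : a closed type all of whose normal inhabitants are
typable in system F₀. -/
def IsInputType (E : Ty) : Prop :=
  TyClosed E ∧ ∀ t : Trm, IsNormal t → TypF [] t E → TypF0 [] t E

/-- An output type : a closed type `S` not containing the constant `O` such
that for every normal term `t`, if `α : O ⊢_F t : S` then `α ∉ Fv(t)`. -/
def IsOutputType (S : Ty) : Prop :=
  TyClosed S ∧ ¬ ContainsConst 0 S ∧
    ∀ t : Trm, IsNormal t → TypF [tyO] t S → ¬ FreeIn 0 t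

/-- A syntactical data type : a closed type which is both input and output. -/
def IsSyntacticalDataType (D : Ty) : Prop := IsInputType D ∧ IsOutputType D

mutual
  /-- The ∀⁺ types (positive quantifiers). -/
  inductive PosTy : Ty → Prop
    | var (n : ℕ) : PosTy (.var n)
    | arr {B A : Ty} : NegTy B → PosTy A → PosTy (.arr B A)
    | all {A : Ty} : PosTy A → TyFreeIn 0 A → PosTy (.all A)
  /-- The ∀⁻ types (negative quantifiers). -/
  inductive NegTy : Ty → Prop
    | var (n : ℕ) : NegTy (.var n)
    | arr {B A : Ty} : PosTy B → NegTy A → NegTy (.arr B A)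
end

/-- `EndsInConst c A` : the type `A` ends in the type constant `c`. -/
inductive EndsInConst : ℕ → Ty → Prop
  | base (c : ℕ) : EndsInConst c (.const c)
  | arr {c : ℕ} {A : Ty} (B : Ty) : EndsInConst c A → EndsInConst c (.arr B A)
  | all {c : ℕ} {A : Ty} : EndsInConst c A → EndsInConst c (.all A)

/-- `EndsInVar k A` : the type `A` ends in the type variable `k`
(crossing a quantifier ∀X with X ≠ the variable is allowed). -/
inductive EndsInVar : ℕ → Ty → Prop
  | base (k : ℕ) : EndsInVar k (.var k)
  | arr {k : ℕ} {A : Ty} (B : Ty) : EndsInVar k A → EndsInVar k (.arr B A)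
  | all {k : ℕ} {A : Ty} : EndsInVar (k + 1) A → EndsInVar k (.all A)

/-- The side condition of the restricted rule (∀e)_F : the body `A` of `∀X A`
(the variable X having index `k`) is of the form
`∀X₀(A₁ → ∀X₁(A₂ → … → ∀X_{n-1}(A_n → ∀X_n Y)…))` with `Y = X` or one of the
`A_i` ending in `X`. -/
inductive FFForm : ℕ → Ty → Prop
  | base (k : ℕ) : FFForm k (.var k)
  | all {k : ℕ} {A : Ty} : FFForm (k + 1) A → FFForm k (.all A)
  | arrTail {k : ℕ} {C : Ty} (B : Ty) : FFForm k C → FFForm k (.arr B C)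
  | arrHit {k : ℕ} {B C : Ty} : EndsInVar k B → (∃ j, EndsInVar j C) →
      FFForm k (.arr B C)

/-- The typing judgment of system F_F : system F where the rule (∀e) is
replaced by the restricted rule (∀e)_F. -/
inductive TypFF : List Ty → Trm → Ty → Prop
  | var (Γ : List Ty) (n : ℕ) (A : Ty) : Γ[n]? = some A → TypFF Γ (.var n) A
  | abs {Γ : List Ty} {t : Trm} {B C : Ty} :
      TypFF (B :: Γ) t C → TypFF Γ (.lam t) (.arr B C)
  | app {Γ : List Ty} {u v : Trm} {B C : Ty} :
      TypFF Γ u (.arr B C) → TypFF Γ v B → TypFF Γ (.app u v) C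
  | allI {Γ : List Ty} {t : Trm} {A : Ty} :
      TypFF (Γ.map (liftTy 1 0)) t A → TypFF Γ t (.all A)
  | allE {Γ : List Ty} {t : Trm} {A : Ty} (G : Ty) :
      FFForm 0 A → TypFF Γ t (.all A) → TypFF Γ t (substTy A 0 G)

/-- An output type of system F_F. -/
def IsOutputTypeFF (S : Ty) : Prop :=
  TyClosed S ∧ ¬ ContainsConst 0 S ∧
    ∀ t : Trm, IsNormal t → TypFF [tyO] t S → ¬ FreeIn 0 t

/-- Saturated sets of λ-terms. -/
def Saturated (G : Set Trm) : Prop := ∀ t u : Trm, WHRed t u → u ∈ G → t ∈ G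

/-- `G → G'` on sets of λ-terms. -/
def SetArr (G G' : Set Trm) : Set Trm := {u : Trm | ∀ t ∈ G, Trm.app u t ∈ G'}

/-- Extension of an interpretation by a set for the (de Bruijn) variable 0. -/
def consEnv (G : Set Trm) (I : ℕ → Set Trm) : ℕ → Set Trm
  | 0 => G
  | n + 1 => I n

/-- The value `|A|_I` of a type in an interpretation (`C` interprets the
type constants, `I` the type variables). -/
def TyVal (C : ℕ → Set Trm) : Ty → (ℕ → Set Trm) → Set Trm
  | .var n, I => I n
  | .const c, _ => C c
  | .arr a b, I => SetArr (TyVal C a I) (TyVal C b I)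
  | .all a, I => {t : Trm | ∀ G : Set Trm, Saturated G → t ∈ TyVal C a (consEnv G I)}

/-- `|A|` : the intersection of the values of `A` under all interpretations
by saturated sets. -/
def TyGlobal (A : Ty) : Set Trm :=
  {t : Trm | ∀ C I : ℕ → Set Trm, (∀ c, Saturated (C c)) → (∀ n, Saturated (I n)) →
    t ∈ TyVal C A I}

/-- A data type in Krivine's sense : a closed type `A` with `|A| ≠ ∅` such that
every term of `|A|` β-reduces to a closed term. -/
def IsDataType (A : Ty) : Prop :=
  TyClosed A ∧ TyGlobal A ≠ ∅ ∧
    ∀ t ∈ TyGlobal A, ∃ t' : Trm, BetaRed t t' ∧ TrmClosed t'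

/-- The product type `A ∧ B = ∀X((A → (B → X)) → X)` (X fresh). -/
def tyAnd (A B : Ty) : Ty :=
  .all (.arr (.arr (liftTy 1 0 A) (.arr (liftTy 1 0 B) (.var 0))) (.var 0))

/-- The disjoint sum type `A ∨ B = ∀X((A → X) → ((B → X) → X))` (X fresh). -/
def tyOr (A B : Ty) : Ty :=
  .all (.arr (.arr (liftTy 1 0 A) (.var 0))
    (.arr (.arr (liftTy 1 0 B) (.var 0)) (.var 0)))

/-- The type `LA = ∀X(X → ((A → (X → X)) → X))` of lists of objects of `A`. -/
def tyList (A : Ty) : Ty :=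
  .all (.arr (.var 0)
    (.arr (.arr (liftTy 1 0 A) (.arr (.var 0) (.var 0))) (.var 0)))

/-- Negation `¬A = A → ⊥`. -/
def tyNeg (A : Ty) : Ty := .arr A tyBot

/-- The Gödel translation `A*` : every atomic subformula `R` is replaced
by `¬R`. -/
def godel : Ty → Ty
  | .var n => .arr (.var n) tyBot
  | .const c => .arr (.const c) tyBot
  | .arr a b => .arr (godel a) (godel b)
  | .all a => .all (godel a)

/-- `T` is a storage operator for the pair of types `(E, S)`. -/
def IsStorageOpPair (T : Trm) (E S : Ty) : Prop :=
  TrmClosed T ∧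
    ∀ t : Trm, TypF [] t E →
      ∃ τ τ' : Trm, BetaEq τ τ' ∧ TypF [] τ' S ∧
        ∀ θ : Trm, BetaEq θ t →
          ∀ f : ℕ, ¬ FreeIn f θ → ¬ FreeIn f τ →
            ∃ σ : ℕ → Trm,
              WHRed (.app (.app T θ) (.var f)) (.app (.var f) (msubst σ τ))

/-- `T` is a storage operator for the type `D`. -/
def IsStorageOp (T : Trm) (D : Ty) : Prop := IsStorageOpPair T D D

/-- The term `λx₁…λxₙ.α` (n-fold abstraction over the free variable `α`). -/
def nlam (n a : ℕ) : Trm := Trm.lam^[n] (Trm.var (a + n))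

/-- The term `p_n = λx₁…λxₙλx.x`. -/
def pTrm (n : ℕ) : Trm := Trm.lam^[n] (Trm.lam (Trm.var 0))

/-- `B₁ → … → B_n → A`. -/
def mkArr (Bs : List Ty) (A : Ty) : Ty := Bs.foldr Ty.arr A

/-- The length `Lg(E)` of a type : the number of occurrences of `→` in it. -/
def Lg : Ty → ℕ
  | .var _ => 0
  | .const _ => 0
  | .arr a b => Lg a + Lg b + 1
  | .all a => Lg a

/-- `SubtypeOf A E` : `A` is a subtype (subformula) of `E`. -/
inductive SubtypeOf : Ty → Ty → Prop
  | refl (A : Ty) : SubtypeOf A A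
  | arrL {A B C : Ty} : SubtypeOf A B → SubtypeOf A (.arr B C)
  | arrR {A B C : Ty} : SubtypeOf A C → SubtypeOf A (.arr B C)
  | all {A B : Ty} : SubtypeOf A B → SubtypeOf A (.all B)

/-- `InAppPos k t` : the variable `k` occurs in application (function)
position in `t`, i.e. some subterm of `t` is of the form `(k)u`. -/
def InAppPos : ℕ → Trm → Prop
  | _, .var _ => False
  | k, .app u v => u = .var k ∨ InAppPos k u ∨ InAppPos k v
  | k, .lam u => InAppPos (k + 1) u

/-- The simple translation `A^s` : `X^s = X`, `(B → C)^s = B^s → C^s`,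
`(∀X B)^s = B^s` (the variables freed by erasing the quantifiers are collapsed
onto the type variable `0`). `d` counts the erased quantifiers. -/
def eraseTyAux : ℕ → Ty → Ty
  | d, .var n => .var (n - d)
  | _, .const c => .const c
  | d, .arr a b => .arr (eraseTyAux d a) (eraseTyAux d b)
  | d, .all a => eraseTyAux (d + 1) a

/-- The simple translation `A^s`. -/
def eraseTy : Ty → Ty := eraseTyAux 0

/-- The identity term `λx.x`. -/
def idTrm : Trm := .lam (.var 0)

/-- The boolean `𝟙 = λxλy.x`. -/
def oneTrm : Trm := .lam (.lam (.var 1))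

/-- The pair of λ-terms `(T_F, T'_F)` associated with a type `F` (the
distinguished variable `X` having de Bruijn index `k`; the term variable `α`
is the free term variable `0`):
`T_F = T'_F = λx.x` if `X ∉ Fv(F)`;
`T_X = λxλβλg.(g)xα`, `T'_X = λx.(x)α𝟙`;
`T_{C→D} = λxλy.(T_D)(x)(T'_C)y`, `T'_{C→D} = λxλy.(T'_D)(x)(T_C)y`;
`T_{∀Y B} = λx.(T_B)x`, `T'_{∀Y B} = λx.(T'_B)x`. -/
def TTpair : ℕ → Ty → Trm × Trm
  | k, .var n =>
      if n = k then
        (.lam (.lam (.lam (.app (.app (.var 0) (.var 2)) (.var 3)))),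
         .lam (.app (.app (.var 0) (.var 1)) oneTrm))
      else (idTrm, idTrm)
  | _, .const _ => (idTrm, idTrm)
  | k, .arr C D =>
      if tyFreeInB k (.arr C D) then
        (.lam (.lam (.app (liftTrm 2 0 (TTpair k D).1)
            (.app (.var 1) (.app (liftTrm 2 0 (TTpair k C).2) (.var 0))))),
         .lam (.lam (.app (liftTrm 2 0 (TTpair k D).2)
            (.app (.var 1) (.app (liftTrm 2 0 (TTpair k C).1) (.var 0))))))
      else (idTrm, idTrm)
  | k, .all B =>
      if tyFreeInB k (.all B) then
        (.lam (.app (liftTrm 1 0 (TTpair (k + 1) B).1) (.var 0)),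
         .lam (.app (liftTrm 1 0 (TTpair (k + 1) B).2) (.var 0)))
      else (idTrm, idTrm)


/-! ### Auxiliary development -/

section AuxTy

/-- free variables of `A` are `< k` -/
theorem liftTy_eq_of_lt : ∀ (A : Ty) (d k : ℕ), (∀ i, TyFreeIn i A → i < k) → liftTy d k A = A := by
  intro A
  induction A with
  | var n => intro d k h; have : n < k := h n rfl; simp [liftTy, this]
  | const c => intro d k h; rfl
  | arr a b iha ihb =>
      intro d k h
      have ha := iha d k (fun i hi => h i (Or.inl hi))
      have hb := ihb d k (fun i hi => h i (Or.inr hi))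
      simp [liftTy, ha, hb]
  | all a ih =>
      intro d k h
      have ha := ih d (k+1) (fun i hi => by
        cases i with
        | zero => omega
        | succ j => exact Nat.succ_lt_succ (h j hi))
      simp [liftTy, ha]

theorem substTy_eq_of_lt : ∀ (A : Ty) (k : ℕ) (G : Ty), (∀ i, TyFreeIn i A → i < k) → substTy A k G = A := by
  intro A
  induction A with
  | var n => intro k G h; have : n < k := h n rfl; simp [substTy, this]
  | const c => intro k G h; rfl
  | arr a b iha ihb =>
      intro k G h
      simp [substTy, iha k G (fun i hi => h i (Or.inl hi)), ihb k G (fun i hi => h i (Or.inr hi))]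
  | all a ih =>
      intro k G h
      have ha := ih (k+1) G (fun i hi => by
        cases i with
        | zero => omega
        | succ j => exact Nat.succ_lt_succ (h j hi))
      simp [substTy, ha]

theorem TyClosed.liftEq {A : Ty} (h : TyClosed A) (d k : ℕ) : liftTy d k A = A :=
  liftTy_eq_of_lt A d k (fun i hi => absurd hi (h i))

theorem TyClosed.substEq {A : Ty} (h : TyClosed A) (k : ℕ) (G : Ty) : substTy A k G = A :=
  substTy_eq_of_lt A k G (fun i hi => absurd hi (h i))

theorem tyO_closed : TyClosed tyO := by intro k h; exact h

/-- lifting of a parallel type substitution under a binder -/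
def liftSubTy (σ : ℕ → Ty) : ℕ → Ty
  | 0 => .var 0
  | n + 1 => liftTy 1 0 (σ n)

/-- parallel type substitution -/
def msubstTy (σ : ℕ → Ty) : Ty → Ty
  | .var n => σ n
  | .const c => .const c
  | .arr a b => .arr (msubstTy σ a) (msubstTy σ b)
  | .all a => .all (msubstTy (liftSubTy σ) a)

theorem msubstTy_congr : ∀ (A : Ty) (σ τ : ℕ → Ty), (∀ n, σ n = τ n) → msubstTy σ A = msubstTy τ A := by
  intro A
  induction A with
  | var n => intro σ τ h; exact h n
  | const c => intro σ τ h; rfl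
  | arr a b iha ihb => intro σ τ h; simp [msubstTy, iha σ τ h, ihb σ τ h]
  | all a ih =>
      intro σ τ h
      have : ∀ n, liftSubTy σ n = liftSubTy τ n := by
        intro n; cases n with
        | zero => rfl
        | succ m => simp [liftSubTy, h m]
      simp [msubstTy, ih _ _ this]

theorem msubstTy_var_id : ∀ (A : Ty), msubstTy Ty.var A = A := by
  intro A
  induction A with
  | var n => rfl
  | const c => rfl
  | arr a b iha ihb => simp [msubstTy, iha, ihb]
  | all a ih =>
      have h : ∀ n, liftSubTy Ty.var n = Ty.var n := by
        intro n; cases n with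
        | zero => rfl
        | succ m => simp [liftSubTy, liftTy]
      simp [msubstTy, msubstTy_congr a _ _ h, ih]

theorem msubstTy_eq_of : ∀ (A : Ty) (σ : ℕ → Ty), (∀ n, TyFreeIn n A → σ n = .var n) → msubstTy σ A = A := by
  intro A
  induction A with
  | var n => intro σ h; exact h n rfl
  | const c => intro σ h; rfl
  | arr a b iha ihb =>
      intro σ h
      simp [msubstTy, iha σ (fun n hn => h n (Or.inl hn)), ihb σ (fun n hn => h n (Or.inr hn))]
  | all a ih =>
      intro σ h
      have : msubstTy (liftSubTy σ) a = a := by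
        refine ih _ (fun n hn => ?_)
        cases n with
        | zero => rfl
        | succ m => simp [liftSubTy, h m hn, liftTy]
      simp [msubstTy, this]

theorem TyClosed.msubstEq {A : Ty} (h : TyClosed A) (σ : ℕ → Ty) : msubstTy σ A = A :=
  msubstTy_eq_of A σ (fun n hn => absurd hn (h n))

/- lift-lift commutations -/
theorem liftTy_liftTy_add : ∀ (G : Ty) (a b j : ℕ), liftTy a j (liftTy b j G) = liftTy (a + b) j G := by
  intro G
  induction G with
  | var n =>
      intro a b j
      by_cases h : n < j <;> simp [liftTy, h]
      have : ¬ n + b < j := by omega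
      simp [liftTy, this]; omega
  | const c => intro a b j; rfl
  | arr x y ihx ihy => intro a b j; simp [liftTy, ihx, ihy]
  | all x ih => intro a b j; simp [liftTy, ih]

theorem liftTy_comm : ∀ (A : Ty) (j k : ℕ), j ≤ k → liftTy 1 j (liftTy 1 k A) = liftTy 1 (k+1) (liftTy 1 j A) := by
  intro A
  induction A with
  | var n =>
      intro j k hjk
      rcases Nat.lt_trichotomy n j with h | h | h
      · have h1 : n < k := by omega
        have h2 : n < k + 1 := by omega
        simp [liftTy, h, h1, h2]
      · subst h
        by_cases h1 : n < k <;> simp [liftTy, h1] <;> first | omega | skip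
      · by_cases h1 : n < k
        · have h2 : ¬ n < j := by omega
          have h3 : n + 1 < k + 1 := by omega
          simp [liftTy, h1, h2, h3]
        · have h2 : ¬ n < j := by omega
          have h3 : ¬ n + 1 < j := by omega
          have h4 : ¬ n + 1 < k + 1 := by omega
          simp [liftTy, h1, h2, h3, h4]
  | const c => intro j k h; rfl
  | arr x y ihx ihy => intro j k h; simp [liftTy, ihx _ _ h, ihy _ _ h]
  | all x ih => intro j k h; simp [liftTy, ih (j+1) (k+1) (by omega)]

theorem liftTy_one_lift : ∀ (G : Ty) (i j k : ℕ), j ≤ k → k ≤ i + j → liftTy 1 k (liftTy i j G) = liftTy (i+1) j G := by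
  intro G
  induction G with
  | var n =>
      intro i j k h1 h2
      by_cases h : n < j
      · have : n < k := by omega
        simp [liftTy, h, this]
      · have h3 : ¬ n + i < k := by omega
        simp [liftTy, h, h3]; omega
  | const c => intro i j k h1 h2; rfl
  | arr x y ihx ihy => intro i j k h1 h2; simp [liftTy, ihx _ _ _ h1 h2, ihy _ _ _ h1 h2]
  | all x ih => intro i j k h1 h2; simp [liftTy, ih i (j+1) (k+1) (by omega) (by omega)]

theorem substTy_liftTy : ∀ (X : Ty) (i k : ℕ) (G : Ty), k ≤ i → substTy (liftTy 1 k X) (i+1) G = liftTy 1 k (substTy X i G) := by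
  intro X
  induction X with
  | var n =>
      intro i k G hki
      by_cases h : n < k
      · have h1 : n < i + 1 := by omega
        have h2 : n < i := by omega
        simp [liftTy, substTy, h, h1, h2]
      · rcases Nat.lt_trichotomy n i with h1 | h1 | h1
        · have h2 : n + 1 < i + 1 := by omega
          have h3 : ¬ n + 1 < k := by omega
          simp [liftTy, substTy, h, h1, h2, h3]
        · subst h1
          have h2 : ¬ n + 1 < n + 1 := by omega
          have h3 : ¬ n < n := by omega
          simp [liftTy, substTy, h, h2, h3]
          exact (liftTy_one_lift G n 0 k (by omega) (by omega)).symm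
        · have h2 : ¬ n + 1 < i + 1 := by omega
          have h3 : n + 1 ≠ i + 1 := by omega
          have h4 : ¬ n < i := by omega
          have h5 : n ≠ i := by omega
          have h6 : ¬ n - 1 < k := by omega
          simp [liftTy, substTy, h, h2, h3, h4, h5, h6]
          omega
  | const c => intro i k G h; rfl
  | arr x y ihx ihy => intro i k G h; simp [liftTy, substTy, ihx _ _ _ h, ihy _ _ _ h]
  | all x ih =>
      intro i k G h
      show Ty.all (substTy (liftTy 1 (k+1) x) (i+1+1) G) = Ty.all (liftTy 1 (k+1) (substTy x (i+1) G))
      rw [ih (i+1) (k+1) G (by omega)]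

end AuxTy
section AuxTy2

/-- iterated liftSubTy -/
def upS (σ : ℕ → Ty) : ℕ → ℕ → Ty
  | 0 => σ
  | k + 1 => liftSubTy (upS σ k)

theorem upS_lt (σ : ℕ → Ty) : ∀ k n, n < k → upS σ k n = .var n := by
  intro k
  induction k with
  | zero => intro n h; omega
  | succ m ih =>
      intro n h
      cases n with
      | zero => rfl
      | succ j => show liftTy 1 0 (upS σ m j) = _; rw [ih j (by omega)]; simp [liftTy]

theorem upS_ge (σ : ℕ → Ty) : ∀ k n, k ≤ n → upS σ (k+1) (n+1) = liftTy 1 k (upS σ k n) := by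
  intro k
  induction k with
  | zero => intro n h; rfl
  | succ m ih =>
      intro n h
      cases n with
      | zero => omega
      | succ j =>
          show liftTy 1 0 (upS σ (m+1) (j+1)) = liftTy 1 (m+1) (liftTy 1 0 (upS σ m j))
          rw [ih j (by omega), ← liftTy_comm _ 0 m (by omega)]

theorem msubstTy_liftTy : ∀ (A : Ty) (k : ℕ) (σ : ℕ → Ty),
    msubstTy (upS σ (k+1)) (liftTy 1 k A) = liftTy 1 k (msubstTy (upS σ k) A) := by
  intro A
  induction A with
  | var n =>
      intro k σ
      by_cases h : n < k
      · simp [liftTy, h, msubstTy, upS_lt σ (k+1) n (by omega), upS_lt σ k n h]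
      · simp [liftTy, h, msubstTy]
        exact upS_ge σ k n (by omega)
  | const c => intro k σ; rfl
  | arr a b iha ihb => intro k σ; simp [liftTy, msubstTy, iha, ihb]
  | all a ih =>
      intro k σ
      show Ty.all (msubstTy (liftSubTy (upS σ (k+1))) (liftTy 1 (k+1) a)) = Ty.all (liftTy 1 (k+1) (msubstTy (liftSubTy (upS σ k)) a))
      have := ih (k+1) σ
      exact congrArg Ty.all this

theorem msubstTy_liftTy0 (A : Ty) (σ : ℕ → Ty) :
    msubstTy (liftSubTy σ) (liftTy 1 0 A) = liftTy 1 0 (msubstTy σ A) :=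
  msubstTy_liftTy A 0 σ

theorem msubstTy_msubstTy : ∀ (A : Ty) (σ τ : ℕ → Ty),
    msubstTy σ (msubstTy τ A) = msubstTy (fun n => msubstTy σ (τ n)) A := by
  intro A
  induction A with
  | var n => intro σ τ; rfl
  | const c => intro σ τ; rfl
  | arr a b iha ihb => intro σ τ; simp [msubstTy, iha, ihb]
  | all a ih =>
      intro σ τ
      show Ty.all (msubstTy (liftSubTy σ) (msubstTy (liftSubTy τ) a)) = Ty.all (msubstTy (liftSubTy fun n => msubstTy σ (τ n)) a)
      rw [ih]
      refine congrArg Ty.all (msubstTy_congr a _ _ (fun n => ?_))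
      cases n with
      | zero => rfl
      | succ m =>
          show msubstTy (liftSubTy σ) (liftTy 1 0 (τ m)) = liftTy 1 0 (msubstTy σ (τ m))
          exact msubstTy_liftTy0 (τ m) σ

/-- the single substitution `[G/k]` as a parallel substitution -/
def subOf (k : ℕ) (G : Ty) : ℕ → Ty := fun n =>
  if n < k then .var n else if n = k then liftTy k 0 G else .var (n - 1)

theorem liftSubTy_subOf (k : ℕ) (G : Ty) : ∀ n, liftSubTy (subOf k G) n = subOf (k+1) G n := by
  intro n
  cases n with
  | zero => simp [liftSubTy, subOf]
  | succ m =>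
      show liftTy 1 0 (subOf k G m) = subOf (k+1) G (m+1)
      rcases Nat.lt_trichotomy m k with h | h | h
      · have h3 : m + 1 < k + 1 := by omega
        simp [subOf, h, h3, liftTy]
      · subst h
        have h2 : ¬ m + 1 < m + 1 := by omega
        simp [subOf, h2]
        exact liftTy_one_lift G m 0 0 (by omega) (by omega)
      · have h1 : ¬ m < k := by omega
        have h2 : m ≠ k := by omega
        have h3 : ¬ m + 1 < k + 1 := by omega
        have h4 : m + 1 ≠ k + 1 := by omega
        simp [subOf, h1, h2, h3, h4, liftTy]
        omega

theorem substTy_as_msubst : ∀ (A : Ty) (k : ℕ) (G : Ty), substTy A k G = msubstTy (subOf k G) A := by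
  intro A
  induction A with
  | var n => intro k G; simp [substTy, msubstTy, subOf]
  | const c => intro k G; rfl
  | arr a b iha ihb => intro k G; simp [substTy, msubstTy, iha, ihb]
  | all a ih =>
      intro k G
      show Ty.all (substTy a (k+1) G) = Ty.all (msubstTy (liftSubTy (subOf k G)) a)
      rw [ih (k+1) G, msubstTy_congr a _ _ (liftSubTy_subOf k G)]

theorem msubstTy_subOf_liftTy : ∀ (X : Ty) (k : ℕ) (H : Ty), msubstTy (subOf k H) (liftTy 1 k X) = X := by
  intro X
  induction X with
  | var n =>
      intro k H
      by_cases h : n < k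
      · simp [liftTy, h, msubstTy, subOf]
      · have h1 : ¬ n + 1 < k := by omega
        have h2 : n + 1 ≠ k := by omega
        simp [liftTy, h, msubstTy, subOf, h1, h2]
  | const c => intro k H; rfl
  | arr a b iha ihb => intro k H; simp [liftTy, msubstTy, iha, ihb]
  | all a ih =>
      intro k H
      show Ty.all (msubstTy (liftSubTy (subOf k H)) (liftTy 1 (k+1) a)) = Ty.all a
      rw [msubstTy_congr _ _ _ (liftSubTy_subOf k H), ih (k+1) H]

theorem liftTy_zero : ∀ (A : Ty) (k : ℕ), liftTy 0 k A = A := by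
  intro A
  induction A with
  | var n => intro k; by_cases h : n < k <;> simp [liftTy, h]
  | const c => intro k; rfl
  | arr a b iha ihb => intro k; simp [liftTy, iha, ihb]
  | all a ih => intro k; simp [liftTy, ih]

theorem msubstTy_substTy0 (A : Ty) (σ : ℕ → Ty) (G : Ty) :
    msubstTy σ (substTy A 0 G) = substTy (msubstTy (liftSubTy σ) A) 0 (msubstTy σ G) := by
  rw [substTy_as_msubst A 0 G, substTy_as_msubst _ 0 _, msubstTy_msubstTy, msubstTy_msubstTy]
  refine msubstTy_congr A _ _ (fun n => ?_)
  cases n with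
  | zero =>
      show msubstTy σ (subOf 0 G 0) = msubstTy (subOf 0 (msubstTy σ G)) (Ty.var 0)
      simp [subOf, msubstTy, liftTy_zero]
  | succ m =>
      show msubstTy σ (subOf 0 G (m+1)) = msubstTy (subOf 0 (msubstTy σ G)) (liftTy 1 0 (σ m))
      rw [msubstTy_subOf_liftTy]
      simp [subOf, msubstTy]

theorem substTy_msubst (P : Ty) (σ : ℕ → Ty) (i : ℕ) (G : Ty) :
    substTy (msubstTy σ P) i G = msubstTy (fun n => substTy (σ n) i G) P := by
  rw [substTy_as_msubst _ i G, msubstTy_msubstTy]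
  exact msubstTy_congr P _ _ (fun n => (substTy_as_msubst (σ n) i G).symm)

end AuxTy2
section Gen

/-- k-fold `∀` -/
def alls : ℕ → Ty → Ty
  | 0, T => T
  | k+1, T => .all (alls k T)

theorem substTy_alls : ∀ (k : ℕ) (T : Ty) (i : ℕ) (G : Ty),
    substTy (alls k T) i G = alls k (substTy T (i+k) G) := by
  intro k
  induction k with
  | zero => intro T i G; rfl
  | succ m ih =>
      intro T i G
      show Ty.all (substTy (alls m T) (i+1) G) = Ty.all (alls m (substTy T (i+(m+1)) G))
      rw [ih T (i+1) G]
      have : i + 1 + m = i + (m+1) := by omega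
      rw [this]

/-- chains of (∀i)/(∀e) on the source side of the (ax) rule -/
inductive VarTy : Ty → Ty → Prop
  | refl (T) : VarTy T T
  | allI {T C} : VarTy (liftTy 1 0 T) C → VarTy T (.all C)
  | allE {T C} (G) : VarTy T (.all C) → VarTy T (substTy C 0 G)

/-- chains of (∀i)/(∀e) after a core rule; the ℕ counts the (∀i) (context lifts) -/
inductive ReachL : ℕ → Ty → Ty → Prop
  | zero (T) : ReachL 0 T T
  | allI {m T C} : ReachL m T C → ReachL (m+1) T (.all C)
  | allE {m T C} (G) : ReachL m T (.all C) → ReachL m T (substTy C 0 G)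

def liftCtxN : ℕ → List Ty → List Ty
  | 0, Γ => Γ
  | m+1, Γ => liftCtxN m (Γ.map (liftTy 1 0))

def tlift : ℕ → Ty → Ty
  | 0, T => T
  | m+1, T => tlift m (liftTy 1 0 T)

theorem liftCtxN_nil : ∀ m, liftCtxN m [] = [] := by
  intro m; induction m with
  | zero => rfl
  | succ k ih => exact ih

theorem liftCtxN_cons : ∀ m (T : Ty) (Γ : List Ty), liftCtxN m (T :: Γ) = tlift m T :: liftCtxN m Γ := by
  intro m
  induction m with
  | zero => intro T Γ; rfl
  | succ k ih => intro T Γ; exact ih _ _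

theorem tlift_closed {T : Ty} (h : TyClosed T) : ∀ m, tlift m T = T := by
  intro m
  induction m with
  | zero => rfl
  | succ k ih => show tlift k (liftTy 1 0 T) = T; rw [h.liftEq]; exact ih

theorem tlift_shape {s : ℕ → Ty} (hlift : ∀ j, liftTy 1 0 (s j) = s (j+1)) :
    ∀ m j, tlift m (s j) = s (j + m) := by
  intro m
  induction m with
  | zero => intro j; rfl
  | succ k ih =>
      intro j
      show tlift k (liftTy 1 0 (s j)) = s (j + (k+1))
      rw [hlift j, ih (j+1)]
      congr 1; omega

theorem liftCtxN_getElem : ∀ (m : ℕ) (Γ : List Ty) (i : ℕ), (liftCtxN m Γ)[i]? = Option.map (tlift m) Γ[i]? := by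
  intro m
  induction m with
  | zero =>
      intro Γ i
      show Γ[i]? = (Γ[i]?).map (tlift 0)
      cases h : Γ[i]? <;> simp [h, tlift]
  | succ k ih =>
      intro Γ i
      show (liftCtxN k (Γ.map (liftTy 1 0)))[i]? = _
      rw [ih]
      rw [List.getElem?_map]
      cases h : Γ[i]? <;> simp [h, tlift]

/-- generation for variables -/
theorem typF_varGen {Γ t C} (h : TypF Γ t C) : ∀ n, t = .var n → ∃ T, Γ[n]? = some T ∧ VarTy T C := by
  induction h with
  | var Γ n A hl => intro m hm; cases hm; exact ⟨A, hl, VarTy.refl A⟩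
  | abs _ _ => intro m hm; cases hm
  | app _ _ _ _ => intro m hm; cases hm
  | allI _ ih =>
      intro m hm
      obtain ⟨T', hT', hv⟩ := ih m hm
      rw [List.getElem?_map] at hT'
      rcases h2 : Option.map (liftTy 1 0) ‹List Ty›[m]? with _ | T'' <;> rw [h2] at hT'
      · cases hT'
      · cases hT'
        rcases h3 : ‹List Ty›[m]? with _ | T <;> rw [h3] at h2
        · cases h2
        · simp only [Option.map_some] at h2
          cases h2
          exact ⟨T, h3, VarTy.allI hv⟩
  | allE G _ ih =>
      intro m hm
      obtain ⟨T, hT, hv⟩ := ih m hm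
      exact ⟨T, hT, VarTy.allE G hv⟩

/-- generation for applications -/
theorem typF_appGen {Γ t C} (h : TypF Γ t C) : ∀ u v, t = .app u v →
    ∃ m P Q, TypF (liftCtxN m Γ) u (.arr P Q) ∧ TypF (liftCtxN m Γ) v P ∧ ReachL m Q C := by
  induction h with
  | var _ _ _ _ => intro u v huv; cases huv
  | abs _ _ => intro u v huv; cases huv
  | app h1 h2 _ _ =>
      intro u v huv; cases huv
      exact ⟨0, _, _, h1, h2, ReachL.zero _⟩
  | allI _ ih =>
      intro u v huv
      obtain ⟨m, P, Q, h1, h2, hr⟩ := ih u v huv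
      exact ⟨m+1, P, Q, h1, h2, ReachL.allI hr⟩
  | allE G _ ih =>
      intro u v huv
      obtain ⟨m, P, Q, h1, h2, hr⟩ := ih u v huv
      exact ⟨m, P, Q, h1, h2, ReachL.allE G hr⟩

/-- generation for abstractions -/
theorem typF_lamGen {Γ t C} (h : TypF Γ t C) : ∀ b, t = .lam b →
    ∃ m P Q, TypF (P :: liftCtxN m Γ) b Q ∧ ReachL m (.arr P Q) C := by
  induction h with
  | var _ _ _ _ => intro b hb; cases hb
  | abs h1 _ => intro b hb; cases hb; exact ⟨0, _, _, h1, ReachL.zero _⟩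
  | app _ _ _ _ => intro b hb; cases hb
  | allI _ ih =>
      intro b hb
      obtain ⟨m, P, Q, h1, hr⟩ := ih b hb
      exact ⟨m+1, P, Q, h1, ReachL.allI hr⟩
  | allE G _ ih =>
      intro b hb
      obtain ⟨m, P, Q, h1, hr⟩ := ih b hb
      exact ⟨m, P, Q, h1, ReachL.allE G hr⟩

/-- tight characterization of `VarTy` chains from a "rigid-shaped" source -/
theorem varTy_shape {s : ℕ → Ty}
    (hlift : ∀ j, liftTy 1 0 (s j) = s (j+1))
    (hsub : ∀ j k G, substTy (s (j+k+1)) k G = s (j+k))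
    (hnotall : ∀ j C', s j ≠ .all C') :
    ∀ {T C}, VarTy T C → ∀ j, T = s j → ∃ k, C = alls k (s (j+k)) := by
  intro T C h
  induction h with
  | refl T => intro j hj; exact ⟨0, hj⟩
  | allI _ ih =>
      intro j hj
      obtain ⟨k, hk⟩ := ih (j+1) (by rw [← hlift j, hj])
      refine ⟨k+1, ?_⟩
      show Ty.all _ = Ty.all (alls k (s (j+(k+1))))
      rw [hk]
      have e : j + 1 + k = j + (k+1) := by omega
      rw [e]
  | allE G _ ih =>
      intro j hj
      obtain ⟨k, hk⟩ := ih j hj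
      cases k with
      | zero => exact absurd hk.symm (hnotall j _)
      | succ k' =>
          injection hk with hk
          refine ⟨k', ?_⟩
          rw [hk, substTy_alls]
          congr 1
          show substTy (s (j + (k'+1))) (0 + k') G = s (j + k')
          have e1 : j + (k'+1) = j + k' + 1 := by omega
          have e2 : (0 : ℕ) + k' = k' := by omega
          rw [e1, e2, hsub j k' G]

/-- tight characterization of `ReachL` chains from a "rigid-shaped" source -/
theorem reachL_shape {s : ℕ → Ty}
    (hlift : ∀ j, liftTy 1 0 (s j) = s (j+1))
    (hsub : ∀ j k G, substTy (s (j+k+1)) k G = s (j+k))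
    (hnotall : ∀ j C', s j ≠ .all C') :
    ∀ {m T C}, ReachL m T C → ∀ j, T = s (j + m) → ∃ k, C = alls k (s (j+k)) := by
  intro m T C h
  induction h with
  | zero T => intro j hj; exact ⟨0, hj⟩
  | allI _ ih =>
      intro j hj
      obtain ⟨k, hk⟩ := ih (j+1) (by rw [hj]; congr 1; omega)
      refine ⟨k+1, ?_⟩
      show Ty.all _ = Ty.all (alls k (s (j+(k+1))))
      rw [hk]
      have e : j + 1 + k = j + (k+1) := by omega
      rw [e]
  | allE G _ ih =>
      intro j hj
      obtain ⟨k, hk⟩ := ih j hj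
      cases k with
      | zero => exact absurd hk.symm (hnotall j _)
      | succ k' =>
          injection hk with hk
          refine ⟨k', ?_⟩
          rw [hk, substTy_alls]
          congr 1
          have e1 : j + (k'+1) = j + k' + 1 := by omega
          have e2 : (0 : ℕ) + k' = k' := by omega
          rw [e1, e2, hsub j k' G]

/-- corollary: closed sources -/
theorem varTy_closed {T : Ty} (hc : TyClosed T) (hna : ∀ C', T ≠ .all C') :
    ∀ {C}, VarTy T C → ∃ k, C = alls k T := by
  intro C h
  exact varTy_shape (s := fun _ => T) (fun j => hc.liftEq 1 0) (fun j k G => hc.substEq k G)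
    (fun j => hna) h 0 rfl

theorem reachL_closed {T : Ty} (hc : TyClosed T) (hna : ∀ C', T ≠ .all C') :
    ∀ {m C}, ReachL m T C → ∃ k, C = alls k T := by
  intro m C h
  exact reachL_shape (s := fun _ => T) (fun j => hc.liftEq 1 0) (fun j k G => hc.substEq k G)
    (fun j => hna) h 0 rfl

/-- instance characterization of `ReachL` chains from an arrow source -/
theorem reachL_arr_inst : ∀ {m T C}, ReachL m T C → ∀ P Q, T = .arr P Q →
    ∃ k σ, (∀ j, σ (j + m) = Ty.var (j + k)) ∧
      C = alls k (.arr (msubstTy σ P) (msubstTy σ Q)) := by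
  intro m T C h
  induction h with
  | zero T =>
      intro P Q hT
      exact ⟨0, Ty.var, fun j => rfl, by rw [hT, msubstTy_var_id, msubstTy_var_id]; rfl⟩
  | @allI m' T' C' _ ih =>
      intro P Q hT
      obtain ⟨k, σ, hσ, hC⟩ := ih P Q hT
      refine ⟨k+1, σ, fun j => ?_, ?_⟩
      · have e1 : j + (m' + 1) = (j+1) + m' := by omega
        rw [e1, hσ (j+1)]
        congr 1; omega
      · show Ty.all C' = Ty.all (alls k _)
        rw [hC]
  | allE G _ ih =>
      intro P Q hT
      obtain ⟨k, σ, hσ, hC⟩ := ih P Q hT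
      cases k with
      | zero => cases hC
      | succ k' =>
          injection hC with hC
          refine ⟨k', fun n => substTy (σ n) k' G, fun j => ?_, ?_⟩
          · show substTy (σ (j + _)) k' G = _
            rw [hσ j]
            have h1 : ¬ j + (k'+1) < k' := by omega
            have h2 : j + (k'+1) ≠ k' := by omega
            simp [substTy, h1, h2]
          · rw [hC, substTy_alls]
            congr 1
            show substTy (Ty.arr (msubstTy σ P) (msubstTy σ Q)) (0 + k') G = _
            have e2 : (0 : ℕ) + k' = k' := by omega
            rw [e2]
            show Ty.arr (substTy (msubstTy σ P) k' G) (substTy (msubstTy σ Q) k' G) = _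
            rw [substTy_msubst, substTy_msubst]

end Gen
section MsubstTyp

/-- type substitution preserves typing -/
theorem typF_msubst {Γ t C} (h : TypF Γ t C) : ∀ σ, TypF (Γ.map (msubstTy σ)) t (msubstTy σ C) := by
  induction h with
  | var Γ n A hl =>
      intro σ
      refine TypF.var _ n _ ?_
      rw [List.getElem?_map, hl]
      rfl
  | abs _ ih => intro σ; exact TypF.abs (ih σ)
  | app _ _ ih1 ih2 => intro σ; exact TypF.app (ih1 σ) (ih2 σ)
  | @allI Γ' t' A' _ ih =>
      intro σ
      refine TypF.allI (?_ : TypF _ t' (msubstTy (liftSubTy σ) A'))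
      have e : (Γ'.map (liftTy 1 0)).map (msubstTy (liftSubTy σ)) = (Γ'.map (msubstTy σ)).map (liftTy 1 0) := by
        rw [List.map_map, List.map_map]
        refine List.map_congr_left (fun T _ => ?_)
        exact msubstTy_liftTy0 T σ
      rw [← e]
      exact ih (liftSubTy σ)
  | @allE Γ' t' A' G _ ih =>
      intro σ
      have h2 := TypF.allE (msubstTy σ G) (ih σ)
      rw [msubstTy_substTy0]
      exact h2

end MsubstTyp

section NormalForms

mutual
/-- neutral (variable-headed) normal terms -/
inductive Neu : Trm → Prop
  | var (n : ℕ) : Neu (.var n)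
  | app {u v} : Neu u → Nm v → Neu (.app u v)

/-- structurally normal terms -/
inductive Nm : Trm → Prop
  | neu {u} : Neu u → Nm u
  | lam {u} : Nm u → Nm (.lam u)
end

theorem isNormal_app {u v} (h : IsNormal (.app u v)) :
    IsNormal u ∧ IsNormal v ∧ ∀ b, u ≠ .lam b := by
  refine ⟨fun w hw => h _ (BetaStep.appL v hw), fun w hw => h _ (BetaStep.appR u hw), ?_⟩
  intro b hb
  subst hb
  exact h _ (BetaStep.beta b v)

theorem isNormal_lam {b} (h : IsNormal (.lam b)) : IsNormal b :=
  fun w hw => h _ (BetaStep.lam hw)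

theorem nm_of_isNormal : ∀ t, IsNormal t → Nm t := by
  intro t
  induction t with
  | var n => intro _; exact Nm.neu (Neu.var n)
  | lam b ih => intro h; exact Nm.lam (ih (isNormal_lam h))
  | app u v ihu ihv =>
      intro h
      obtain ⟨hu, hv, hnl⟩ := isNormal_app h
      have hnu : Neu u := by
        have := ihu hu
        cases this with
        | neu h' => exact h'
        | lam h' => exact absurd rfl (hnl _)
      exact Nm.neu (Neu.app hnu (ihv hv))

theorem step_not_nm : ∀ {t u}, BetaStep t u → ¬ Nm t := by
  intro t u h
  induction h with
  | beta t u =>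
      intro hn
      cases hn with
      | neu h' => cases h' with | app h1 _ => cases h1
  | appL u _ ih =>
      intro hn
      cases hn with
      | neu h' => cases h' with | app h1 h2 => exact ih (Nm.neu h1)
  | appR t _ ih =>
      intro hn
      cases hn with
      | neu h' => cases h' with | app h1 h2 => exact ih h2
  | lam _ ih =>
      intro hn
      cases hn with
      | neu h' => cases h'
      | lam h' => exact ih h'

theorem isNormal_of_nm {t} (h : Nm t) : IsNormal t := fun u hs => step_not_nm hs h

theorem nm_app_inv {u v} (h : Nm (.app u v)) : Neu u ∧ Nm v := by
  cases h with
  | neu h' => cases h' with | app h1 h2 => exact ⟨h1, h2⟩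

theorem nm_lam_inv {b} (h : Nm (.lam b)) : Nm b := by
  cases h with
  | neu h' => cases h'
  | lam h' => exact h'

end NormalForms
section Phi

/-- n-fold λ -/
def lams : ℕ → Trm → Trm
  | 0, t => t
  | n+1, t => .lam (lams n t)

/-- replace the variable `f` (of arity-`d` service type) by abstractions over
the `O`-variable `f+1`, remove `f` from the context -/
def phiA (d : ℕ) : ℕ → Trm → Trm
  | f, .var n => if n < f then .var n else if n = f then lams d (.var (f + d)) else .var (n - 1)
  | f, .lam u => .lam (phiA d (f+1) u)
  | f, .app (.var m) v =>
      if m = f ∧ 1 ≤ d then lams (d-1) (.var (f + (d-1)))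
      else .app (phiA d f (.var m)) (phiA d f v)
  | f, .app (.app (.var m) w) v =>
      if m = f ∧ 2 ≤ d then lams (d-2) (.var (f + (d-2)))
      else .app (phiA d f (.app (.var m) w)) (phiA d f v)
  | f, .app (.lam u) v => .app (phiA d f (.lam u)) (phiA d f v)
  | f, .app (.app (.lam u) w) v => .app (phiA d f (.app (.lam u) w)) (phiA d f v)
  | f, .app (.app (.app u1 u2) w) v => .app (phiA d f (.app (.app u1 u2) w)) (phiA d f v)

theorem phiA_var (d f n) : phiA d f (.var n) = if n < f then .var n else if n = f then lams d (.var (f + d)) else .var (n - 1) := rfl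
theorem phiA_lam (d f u) : phiA d f (.lam u) = .lam (phiA d (f+1) u) := rfl
theorem phiA_app_var (d f m v) : phiA d f (.app (.var m) v) =
    (if m = f ∧ 1 ≤ d then lams (d-1) (.var (f + (d-1))) else .app (phiA d f (.var m)) (phiA d f v)) := rfl
theorem phiA_app_app_var (d f m w v) : phiA d f (.app (.app (.var m) w) v) =
    (if m = f ∧ 2 ≤ d then lams (d-2) (.var (f + (d-2))) else .app (phiA d f (.app (.var m) w)) (phiA d f v)) := rfl
theorem phiA_app_lam (d f u v) : phiA d f (.app (.lam u) v) = .app (phiA d f (.lam u)) (phiA d f v) := rfl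
theorem phiA_app_app_lam (d f u w v) : phiA d f (.app (.app (.lam u) w) v) = .app (phiA d f (.app (.lam u) w)) (phiA d f v) := rfl
theorem phiA_app_app_app (d f u1 u2 w v) : phiA d f (.app (.app (.app u1 u2) w) v) = .app (phiA d f (.app (.app u1 u2) w)) (phiA d f v) := rfl

/- list lookup helpers -/
theorem get_append_lt : ∀ (l r : List Ty) (n : ℕ), n < l.length → (l ++ r)[n]? = l[n]? := by
  intro l
  induction l with
  | nil => intro r n h; simp at h
  | cons x xs ih =>
      intro r n h
      cases n with
      | zero => simp
      | succ m =>
          simp only [List.cons_append, List.getElem?_cons_succ]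
          exact ih r m (by simpa using h)

theorem get_append_len : ∀ (l : List Ty) (x : Ty) (r : List Ty), (l ++ x :: r)[l.length]? = some x := by
  intro l
  induction l with
  | nil => intro x r; simp
  | cons y ys ih =>
      intro x r
      simp only [List.cons_append, List.length_cons, List.getElem?_cons_succ]
      exact ih x r

theorem get_append_len1 : ∀ (l : List Ty) (x y : Ty) (r : List Ty), (l ++ x :: y :: r)[l.length + 1]? = some y := by
  intro l
  induction l with
  | nil => intro x y r; simp
  | cons z zs ih =>
      intro x y r
      simp only [List.cons_append, List.length_cons, List.getElem?_cons_succ]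
      exact ih x y r

theorem get_append_ge2 : ∀ (l : List Ty) (x y : Ty) (r : List Ty) (n : ℕ), l.length + 2 ≤ n →
    (l ++ x :: y :: r)[n]? = r[n - l.length - 2]? := by
  intro l
  induction l with
  | nil =>
      intro x y r n h
      match n, h with
      | (m+2), _ =>
          simp only [List.nil_append, List.getElem?_cons_succ]
          congr 1
  | cons z zs ih =>
      intro x y r n h
      match n, h with
      | (m+1), h =>
          simp only [List.cons_append, List.getElem?_cons_succ]
          rw [ih x y r m (by simp at h ⊢; omega)]
          congr 1
          simp only [List.length_cons]
          omega

theorem get_append_ge1 : ∀ (l : List Ty) (x : Ty) (r : List Ty) (n : ℕ), l.length + 1 ≤ n →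
    (l ++ x :: r)[n]? = r[n - l.length - 1]? := by
  intro l
  induction l with
  | nil =>
      intro x r n h
      match n, h with
      | (m+1), _ =>
          simp only [List.nil_append, List.getElem?_cons_succ]
          congr 1
  | cons z zs ih =>
      intro x r n h
      match n, h with
      | (m+1), h =>
          simp only [List.cons_append, List.getElem?_cons_succ]
          rw [ih x r m (by simp at h ⊢; omega)]
          congr 1
          simp only [List.length_cons]
          omega

theorem mkArr_closed : ∀ (Ds : List Ty), (∀ D ∈ Ds, TyClosed D) → TyClosed (mkArr Ds tyO) := by
  intro Ds
  induction Ds with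
  | nil => intro _; exact tyO_closed
  | cons D Ds ih =>
      intro h k hk
      have h1 : TyClosed D := h D (by simp)
      have h2 := ih (fun D' hD' => h D' (by simp [hD'])) k
      cases hk with
      | inl hl => exact h1 k hl
      | inr hr => exact h2 hr

theorem mkArr_ne_all : ∀ (Ds : List Ty) (C : Ty), mkArr Ds tyO ≠ .all C := by
  intro Ds C
  cases Ds with
  | nil => exact fun h => Ty.noConfusion h
  | cons D Ds => exact fun h => Ty.noConfusion h

/-- typing of the replacement terms -/
theorem lams_typ : ∀ (Ds : List Ty) (Δ Γ₀ : List Ty),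
    TypF (Δ ++ tyO :: Γ₀) (lams Ds.length (.var (Δ.length + Ds.length))) (mkArr Ds tyO) := by
  intro Ds
  induction Ds with
  | nil =>
      intro Δ Γ₀
      exact TypF.var _ _ _ (by simpa [mkArr] using get_append_len Δ tyO Γ₀)
  | cons D Ds ih =>
      intro Δ Γ₀
      show TypF _ (Trm.lam (lams Ds.length (.var (Δ.length + (Ds.length + 1))))) (Ty.arr D (mkArr Ds tyO))
      refine TypF.abs ?_
      have := ih (D :: Δ) Γ₀
      simp only [List.length_cons] at this
      have e : Δ.length + (Ds.length + 1) = Δ.length + 1 + Ds.length := by omega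
      rw [e]
      exact this

end Phi
section PhiTyp

theorem mkArr_cons (D : Ty) (Ds : List Ty) : mkArr (D :: Ds) tyO = .arr D (mkArr Ds tyO) := rfl

theorem phiA_typ {Γ u C} (h : TypF Γ u C) : ∀ (Δ Ds Γ₀ : List Ty),
    Γ = Δ ++ (mkArr Ds tyO) :: tyO :: Γ₀ → (∀ D ∈ Ds, TyClosed D) →
    TypF (Δ ++ tyO :: Γ₀) (phiA Ds.length Δ.length u) C := by
  induction h with
  | var Γ' n A hl =>
      intro Δ Ds Γ₀ hΓ hDs
      subst hΓ
      rcases Nat.lt_trichotomy n Δ.length with hn | hn | hn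
      · rw [phiA_var, if_pos hn]
        refine TypF.var _ n _ ?_
        rw [get_append_lt _ _ _ hn]
        rw [get_append_lt _ _ _ hn] at hl
        exact hl
      · have hnlt : ¬ n < Δ.length := by omega
        rw [phiA_var, if_neg hnlt, if_pos hn]
        subst hn
        rw [get_append_len] at hl
        cases hl
        exact lams_typ Ds Δ Γ₀
      · have hnlt : ¬ n < Δ.length := by omega
        have hne : n ≠ Δ.length := by omega
        rw [phiA_var, if_neg hnlt, if_neg hne]
        rcases Nat.lt_or_ge n (Δ.length + 2) with hn2 | hn2
        · have he : n = Δ.length + 1 := by omega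
          subst he
          rw [get_append_len1] at hl
          cases hl
          refine TypF.var _ _ _ ?_
          have e : Δ.length + 1 - 1 = Δ.length := by omega
          rw [e, get_append_len]
        · rw [get_append_ge2 _ _ _ _ _ hn2] at hl
          refine TypF.var _ _ _ ?_
          rw [get_append_ge1 _ _ _ _ (by omega)]
          rw [← hl]
          congr 1
          omega
  | abs h1 ih =>
      intro Δ Ds Γ₀ hΓ hDs
      rw [phiA_lam]
      refine TypF.abs ?_
      have := ih (_ :: Δ) Ds Γ₀ (by rw [hΓ]; rfl) hDs
      simpa using this
  | @app Γ' u' v' B' C' h1 h2 ih1 ih2 =>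
      intro Δ Ds Γ₀ hΓ hDs
      cases u' with
      | var m =>
          by_cases hm : m = Δ.length ∧ 1 ≤ Ds.length
          · rw [phiA_app_var, if_pos hm]
            obtain ⟨T, hT, hv⟩ := typF_varGen h1 m rfl
            rw [hΓ, hm.1, get_append_len] at hT
            cases hT
            obtain ⟨k, hk⟩ := varTy_closed (mkArr_closed Ds hDs) (mkArr_ne_all Ds) hv
            cases k with
            | succ k' => exact Ty.noConfusion hk
            | zero =>
                cases Ds with
                | nil => cases hk
                | cons D Ds2 =>
                    rw [mkArr_cons] at hk
                    injection hk with hk1 hk2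
                    subst hk2
                    have e1 : (D :: Ds2).length - 1 = Ds2.length := by simp
                    rw [e1]
                    exact lams_typ Ds2 Δ Γ₀
          · rw [phiA_app_var, if_neg hm]
            exact TypF.app (ih1 Δ Ds Γ₀ hΓ hDs) (ih2 Δ Ds Γ₀ hΓ hDs)
      | lam b =>
          rw [phiA_app_lam]
          exact TypF.app (ih1 Δ Ds Γ₀ hΓ hDs) (ih2 Δ Ds Γ₀ hΓ hDs)
      | app u1 w =>
          cases u1 with
          | var m =>
              by_cases hm : m = Δ.length ∧ 2 ≤ Ds.length
              · rw [phiA_app_app_var, if_pos hm]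
                obtain ⟨m2, P', Q', hf, hw, hr⟩ := typF_appGen h1 _ _ rfl
                obtain ⟨T, hT, hv⟩ := typF_varGen hf m rfl
                rw [liftCtxN_getElem, hΓ, hm.1, get_append_len] at hT
                simp only [Option.map_some] at hT
                rw [tlift_closed (mkArr_closed Ds hDs) m2] at hT
                cases hT
                obtain ⟨k, hk⟩ := varTy_closed (mkArr_closed Ds hDs) (mkArr_ne_all Ds) hv
                cases k with
                | succ k' => exact Ty.noConfusion hk
                | zero =>
                    cases Ds with
                    | nil => cases hk
                    | cons D1 Ds2 =>
                        rw [mkArr_cons] at hk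
                        injection hk with hk1 hk2
                        subst hk2
                        obtain ⟨k2, hk2⟩ := reachL_closed
                          (mkArr_closed Ds2 (fun D hD => hDs D (by simp [hD])))
                          (mkArr_ne_all Ds2) hr
                        cases k2 with
                        | succ k3 => exact Ty.noConfusion hk2
                        | zero =>
                            cases Ds2 with
                            | nil => cases hk2
                            | cons D2 Ds3 =>
                                rw [mkArr_cons] at hk2
                                injection hk2 with hk3 hk4
                                subst hk4
                                have e1 : (D1 :: D2 :: Ds3).length - 2 = Ds3.length := by simp
                                rw [e1]
                                exact lams_typ Ds3 Δ Γ₀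
              · rw [phiA_app_app_var, if_neg hm]
                exact TypF.app (ih1 Δ Ds Γ₀ hΓ hDs) (ih2 Δ Ds Γ₀ hΓ hDs)
          | lam b =>
              rw [phiA_app_app_lam]
              exact TypF.app (ih1 Δ Ds Γ₀ hΓ hDs) (ih2 Δ Ds Γ₀ hΓ hDs)
          | app a b =>
              rw [phiA_app_app_app]
              exact TypF.app (ih1 Δ Ds Γ₀ hΓ hDs) (ih2 Δ Ds Γ₀ hΓ hDs)
  | @allI Γ' t' A' h1 ih =>
      intro Δ Ds Γ₀ hΓ hDs
      have hmk : liftTy 1 0 (mkArr Ds tyO) = mkArr Ds tyO := (mkArr_closed Ds hDs).liftEq 1 0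
      have hctx : Γ'.map (liftTy 1 0) = (Δ.map (liftTy 1 0)) ++ (mkArr Ds tyO) :: tyO :: (Γ₀.map (liftTy 1 0)) := by
        rw [hΓ]
        simp [hmk]
        rfl
      have := ih (Δ.map (liftTy 1 0)) Ds (Γ₀.map (liftTy 1 0)) hctx hDs
      simp only [List.length_map] at this
      refine TypF.allI ?_
      have e : (Δ ++ tyO :: Γ₀).map (liftTy 1 0) = (Δ.map (liftTy 1 0)) ++ tyO :: (Γ₀.map (liftTy 1 0)) := by
        simp
        rfl
      rw [e]
      exact this
  | allE G h1 ih =>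
      intro Δ Ds Γ₀ hΓ hDs
      exact TypF.allE G (ih Δ Ds Γ₀ hΓ hDs)

end PhiTyp
section PhiNm

theorem nm_lams : ∀ (k n : ℕ), Nm (lams k (.var n)) := by
  intro k
  induction k with
  | zero => intro n; exact Nm.neu (Neu.var n)
  | succ m ih => intro n; exact Nm.lam (ih n)

theorem phiA_nm_aux : ∀ u (d f : ℕ), d ≤ 2 →
    ((Nm u → Nm (phiA d f u)) ∧
     (Neu u → Neu (phiA d f u) ∨ (u = .var f ∧ 1 ≤ d) ∨ (∃ w, u = .app (.var f) w ∧ 2 ≤ d))) := by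
  intro u
  induction u with
  | var n =>
      intro d f hd
      constructor
      · intro _
        rw [phiA_var]
        by_cases h1 : n < f
        · rw [if_pos h1]; exact Nm.neu (Neu.var n)
        · rw [if_neg h1]
          by_cases h2 : n = f
          · rw [if_pos h2]; exact nm_lams d (f+d)
          · rw [if_neg h2]; exact Nm.neu (Neu.var _)
      · intro _
        by_cases hc : n = f ∧ 1 ≤ d
        · exact Or.inr (Or.inl ⟨by rw [hc.1], hc.2⟩)
        · left
          rw [phiA_var]
          by_cases h1 : n < f
          · rw [if_pos h1]; exact Neu.var n
          · rw [if_neg h1]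
            by_cases h2 : n = f
            · rw [if_pos h2]
              have hd0 : d = 0 := by omega
              subst hd0
              exact Neu.var (f + 0)
            · rw [if_neg h2]; exact Neu.var _
  | lam b ih =>
      intro d f hd
      constructor
      · intro hnm
        rw [phiA_lam]
        exact Nm.lam ((ih d (f+1) hd).1 (nm_lam_inv hnm))
      · intro hne; cases hne
  | app u1 v ih1 ih2 =>
      intro d f hd
      have hneu : Neu (.app u1 v) → Neu (phiA d f (.app u1 v)) ∨ (Trm.app u1 v = .var f ∧ 1 ≤ d) ∨ (∃ w, Trm.app u1 v = .app (.var f) w ∧ 2 ≤ d) := by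
        intro hne
        obtain ⟨hn1, hnv⟩ := (by cases hne with | app h1 h2 => exact ⟨h1, h2⟩ : Neu u1 ∧ Nm v)
        cases u1 with
        | var m =>
            by_cases hc : m = f ∧ 1 ≤ d
            · rcases Nat.lt_or_ge d 2 with hd2 | hd2
              · have hd1 : d = 1 := by omega
                subst hd1
                left
                rw [phiA_app_var, if_pos hc]
                exact Neu.var _
              · right; right
                exact ⟨v, by rw [hc.1], hd2⟩
            · left
              rw [phiA_app_var, if_neg hc]
              rcases (ih1 d f hd).2 hn1 with h | h | h
              · exact Neu.app h ((ih2 d f hd).1 hnv)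
              · exfalso; injection h.1 with he; exact hc ⟨he, h.2⟩
              · exfalso; obtain ⟨w, hw, _⟩ := h; cases hw
        | lam b => cases hn1
        | app u2 w =>
            cases u2 with
            | var m =>
                by_cases hc : m = f ∧ 2 ≤ d
                · left
                  rw [phiA_app_app_var, if_pos hc]
                  have hd2 : d = 2 := by omega
                  subst hd2
                  exact Neu.var _
                · left
                  rw [phiA_app_app_var, if_neg hc]
                  rcases (ih1 d f hd).2 hn1 with h | h | h
                  · exact Neu.app h ((ih2 d f hd).1 hnv)
                  · exfalso; cases h.1
                  · exfalso
                    obtain ⟨w', hw, h2d⟩ := h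
                    injection hw with hw1 hw2
                    injection hw1 with he
                    exact hc ⟨he, h2d⟩
            | lam b =>
                left
                rw [phiA_app_app_lam]
                rcases (ih1 d f hd).2 hn1 with h | h | h
                · exact Neu.app h ((ih2 d f hd).1 hnv)
                · exfalso; cases h.1
                · exfalso; obtain ⟨w', hw, _⟩ := h; injection hw with hw1 hw2; cases hw1
            | app a b =>
                left
                rw [phiA_app_app_app]
                rcases (ih1 d f hd).2 hn1 with h | h | h
                · exact Neu.app h ((ih2 d f hd).1 hnv)
                · exfalso; cases h.1
                · exfalso; obtain ⟨w', hw, _⟩ := h; injection hw with hw1 hw2; cases hw1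
      refine ⟨?_, hneu⟩
      intro hnm
      have hne : Neu (.app u1 v) := by
        cases hnm with
        | neu h => exact h
      rcases hneu hne with h | h | h
      · exact Nm.neu h
      · cases h.1
      · obtain ⟨w, hw, hd2⟩ := h
        injection hw with hw1 hw2
        subst hw1; subst hw2
        rw [phiA_app_var, if_pos ⟨rfl, by omega⟩]
        exact nm_lams _ _

theorem phiA_nm {u d f} (hd : d ≤ 2) (h : Nm u) : Nm (phiA d f u) :=
  (phiA_nm_aux u d f hd).1 h

theorem freeIn_lams : ∀ (j k : ℕ) (t : Trm), FreeIn k (lams j t) ↔ FreeIn (k + j) t := by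
  intro j
  induction j with
  | zero => intro k t; rfl
  | succ m ih =>
      intro k t
      show FreeIn (k+1) (lams m t) ↔ _
      rw [ih (k+1) t]
      have e : k + 1 + m = k + (m+1) := by omega
      rw [e]

theorem phiA_free : ∀ u (d f : ℕ), FreeIn f u ∨ FreeIn (f+1) u → FreeIn f (phiA d f u) := by
  intro u
  induction u with
  | var n =>
      intro d f h
      have hn : n = f ∨ n = f + 1 := by
        rcases h with h | h
        · exact Or.inl h
        · exact Or.inr h
      rcases hn with hn | hn
      · subst hn
        rw [phiA_var, if_neg (by omega : ¬ n < n), if_pos rfl]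
        rw [freeIn_lams]
        show n + d = n + d
        rfl
      · subst hn
        rw [phiA_var, if_neg (by omega : ¬ f + 1 < f), if_neg (by omega : f + 1 ≠ f)]
        show f + 1 - 1 = f
        omega
  | lam b ih =>
      intro d f h
      rw [phiA_lam]
      show FreeIn (f+1) (phiA d (f+1) b)
      exact ih d (f+1) h
  | app u1 v ih1 ih2 =>
      intro d f h
      have h' : (FreeIn f u1 ∨ FreeIn (f+1) u1) ∨ (FreeIn f v ∨ FreeIn (f+1) v) := by
        rcases h with (h | h) | (h | h)
        · exact Or.inl (Or.inl h)
        · exact Or.inr (Or.inl h)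
        · exact Or.inl (Or.inr h)
        · exact Or.inr (Or.inr h)
      cases u1 with
      | var m =>
          by_cases hc : m = f ∧ 1 ≤ d
          · rw [phiA_app_var, if_pos hc, freeIn_lams]
            show f + (d-1) = f + (d-1)
            rfl
          · rw [phiA_app_var, if_neg hc]
            rcases h' with h' | h'
            · exact Or.inl (ih1 d f h')
            · exact Or.inr (ih2 d f h')
      | lam b =>
          rw [phiA_app_lam]
          rcases h' with h' | h'
          · exact Or.inl (ih1 d f h')
          · exact Or.inr (ih2 d f h')
      | app u2 w =>
          cases u2 with
          | var m =>
              by_cases hc : m = f ∧ 2 ≤ d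
              · rw [phiA_app_app_var, if_pos hc, freeIn_lams]
                show f + (d-2) = f + (d-2)
                rfl
              · rw [phiA_app_app_var, if_neg hc]
                rcases h' with h' | h'
                · exact Or.inl (ih1 d f h')
                · exact Or.inr (ih2 d f h')
          | lam b =>
              rw [phiA_app_app_lam]
              rcases h' with h' | h'
              · exact Or.inl (ih1 d f h')
              · exact Or.inr (ih2 d f h')
          | app a b =>
              rw [phiA_app_app_app]
              rcases h' with h' | h'
              · exact Or.inl (ih1 d f h')
              · exact Or.inr (ih2 d f h')

end PhiNm
section SmallHelpers

theorem liftTy_var0 (j : ℕ) : liftTy 1 0 (.var j) = .var (j+1) := by simp [liftTy]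

theorem substTy_var_gt {n k : ℕ} (h : k < n) (G : Ty) : substTy (.var n) k G = .var (n-1) := by
  have h1 : ¬ n < k := by omega
  have h2 : n ≠ k := by omega
  simp [substTy, h1, h2]

theorem neu_app_inv {u v} (h : Neu (.app u v)) : Neu u ∧ Nm v := by
  cases h with | app h1 h2 => exact ⟨h1, h2⟩

theorem hO1 : ∀ (i : ℕ) (T : Ty), ([tyO] : List Ty)[i]? = some T → T = tyO := by
  intro i T hT
  cases i with
  | zero => simp at hT; exact hT.symm
  | succ j => simp at hT

/-- no neutral term has an arrow type in a context of `O`'s -/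
theorem no_arrow_O : ∀ u, Neu u → ∀ (Γ : List Ty), (∀ (i : ℕ) (T : Ty), Γ[i]? = some T → T = tyO) →
    ∀ P Q, TypF Γ u (.arr P Q) → False := by
  intro u
  induction u with
  | var n =>
      intro _ Γ hΓ P Q hty
      obtain ⟨T, hT, hv⟩ := typF_varGen hty n rfl
      have hTO := hΓ n T hT
      subst hTO
      obtain ⟨k, hk⟩ := varTy_closed tyO_closed (fun C' h => Ty.noConfusion h) hv
      cases k with
      | zero => cases hk
      | succ k' => cases hk
  | lam b ih => intro hne; cases hne
  | app u1 v ih1 ih2 =>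
      intro hne Γ hΓ P Q hty
      obtain ⟨hn1, _⟩ := neu_app_inv hne
      obtain ⟨m, P1, Q1, hu1, _, _⟩ := typF_appGen hty u1 v rfl
      refine ih1 hn1 (liftCtxN m Γ) ?_ P1 Q1 hu1
      intro i T hT
      rw [liftCtxN_getElem] at hT
      rcases h2 : Γ[i]? with _ | T' <;> rw [h2] at hT
      · cases hT
      · simp only [Option.map_some] at hT
        cases hT
        rw [hΓ i T' h2]
        exact tlift_closed tyO_closed m

end SmallHelpers

section MainAnd

variable {A B : Ty}

theorem hliftAnd (hAc : TyClosed A) (hBc : TyClosed B) :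
    ∀ j, liftTy 1 0 (.arr A (.arr B (.var j))) = .arr A (.arr B (.var (j+1))) := by
  intro j
  show Ty.arr (liftTy 1 0 A) (.arr (liftTy 1 0 B) (liftTy 1 0 (.var j))) = _
  rw [hAc.liftEq, hBc.liftEq, liftTy_var0]

theorem hsubAnd (hAc : TyClosed A) (hBc : TyClosed B) :
    ∀ j k G, substTy (.arr A (.arr B (.var (j+k+1)))) k G = .arr A (.arr B (.var (j+k))) := by
  intro j k G
  show Ty.arr (substTy A k G) (.arr (substTy B k G) (substTy (.var (j+k+1)) k G)) = _
  rw [hAc.substEq, hBc.substEq, substTy_var_gt (by omega) G]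
  have e : j + k + 1 - 1 = j + k := by omega
  rw [e]

theorem hliftArr (hBc : TyClosed B) :
    ∀ j, liftTy 1 0 (.arr B (.var j)) = .arr B (.var (j+1)) := by
  intro j
  show Ty.arr (liftTy 1 0 B) (liftTy 1 0 (.var j)) = _
  rw [hBc.liftEq, liftTy_var0]

theorem hsubArr (hBc : TyClosed B) :
    ∀ j k G, substTy (.arr B (.var (j+k+1))) k G = .arr B (.var (j+k)) := by
  intro j k G
  show Ty.arr (substTy B k G) (substTy (.var (j+k+1)) k G) = _
  rw [hBc.substEq, substTy_var_gt (by omega) G]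
  have e : j + k + 1 - 1 = j + k := by omega
  rw [e]

theorem hliftVar : ∀ j : ℕ, liftTy 1 0 (Ty.var j) = .var (j+1) := liftTy_var0

theorem hsubVar : ∀ (j k : ℕ) (G : Ty), substTy (Ty.var (j+k+1)) k G = .var (j+k) := by
  intro j k G
  rw [substTy_var_gt (by omega) G]
  have e : j + k + 1 - 1 = j + k := by omega
  rw [e]

/-- the φ chain for the conjunction context -/
theorem kill_and {A1 A2 S : Ty} (h1 : TyClosed A1) (h2 : TyClosed A2) (hS : IsOutputType S)
    {a : Trm} {ρ : ℕ} (ha : Nm a)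
    (hty : TypF [.arr A1 (.arr A2 (.var ρ)), tyO] a S) : ¬ FreeIn 1 a := by
  intro hfa
  have hτ := typF_msubst hty (fun n => if n = ρ then tyO else .var n)
  have e1 : msubstTy (fun n => if n = ρ then tyO else .var n) (Ty.arr A1 (.arr A2 (.var ρ))) = .arr A1 (.arr A2 tyO) := by
    show Ty.arr (msubstTy _ A1) (.arr (msubstTy _ A2) (if ρ = ρ then tyO else .var ρ)) = _
    rw [h1.msubstEq, h2.msubstEq, if_pos rfl]
  have e2 : msubstTy (fun n => if n = ρ then tyO else .var n) S = S := hS.1.msubstEq _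
  simp only [List.map] at hτ
  rw [e1, e2] at hτ
  have hτ' : TypF ([] ++ (mkArr [A1, A2] tyO) :: tyO :: []) a S := hτ
  have hphi := phiA_typ hτ' [] [A1, A2] [] rfl (by
    intro D hD
    simp only [List.mem_cons, List.not_mem_nil, or_false] at hD
    rcases hD with rfl | rfl
    · exact h1
    · exact h2)
  have hnp : Nm (phiA 2 0 a) := phiA_nm (by omega) ha
  have := hS.2.2 _ (isNormal_of_nm hnp) hphi
  exact this (phiA_free a 2 0 (Or.inr hfa))

/-- spine analysis in the conjunction context -/
theorem spine_and (hAc : TyClosed A) (hBc : TyClosed B) : ∀ u, Neu u → ∀ (ρ : ℕ) (P Q : Ty),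
    TypF [.arr A (.arr B (.var ρ)), tyO] u (.arr P Q) →
    (u = .var 0 ∧ P = A ∧ Q = .arr B (.var ρ)) ∨
    (∃ a ρ', u = .app (.var 0) a ∧ P = B ∧ Q = .var ρ ∧ Nm a ∧
      TypF [.arr A (.arr B (.var ρ')), tyO] a A) := by
  intro u
  induction u with
  | var n =>
      intro _ ρ P Q hty
      obtain ⟨T, hT, hv⟩ := typF_varGen hty n rfl
      match n, hT with
      | 0, hT =>
          simp only [List.getElem?_cons_zero, Option.some.injEq] at hT
          subst hT
          obtain ⟨k, hk⟩ := varTy_shape (s := fun j => Ty.arr A (.arr B (.var j)))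
            (hliftAnd hAc hBc) (hsubAnd hAc hBc) (fun j C' h => Ty.noConfusion h) hv ρ rfl
          cases k with
          | zero =>
              injection hk with hk1 hk2
              exact Or.inl ⟨rfl, hk1, by rw [hk2, Nat.add_zero]⟩
          | succ k' => cases hk
      | 1, hT =>
          simp only [List.getElem?_cons_succ, List.getElem?_cons_zero, Option.some.injEq] at hT
          subst hT
          obtain ⟨k, hk⟩ := varTy_closed tyO_closed (fun C' h => Ty.noConfusion h) hv
          cases k with
          | zero => cases hk
          | succ k' => cases hk
      | (n+2), hT => simp at hT
  | lam b ih => intro hne; cases hne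
  | app u1 v ih1 ih2 =>
      intro hne ρ P Q hty
      obtain ⟨hn1, hnv⟩ := neu_app_inv hne
      obtain ⟨m, P1, Q1, hu1, hv1, hr⟩ := typF_appGen hty u1 v rfl
      have hctx : liftCtxN m [Ty.arr A (.arr B (.var ρ)), tyO] = [.arr A (.arr B (.var (ρ+m))), tyO] := by
        rw [liftCtxN_cons, liftCtxN_cons, liftCtxN_nil, tlift_closed tyO_closed,
          tlift_shape (hliftAnd hAc hBc) m ρ]
      rw [hctx] at hu1 hv1
      rcases ih1 hn1 (ρ+m) P1 Q1 hu1 with ⟨he, hP1, hQ1⟩ | ⟨a, ρ', he, hP1, hQ1, hna, hta⟩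
      · subst hQ1
        obtain ⟨k, hk⟩ := reachL_shape (s := fun j => Ty.arr B (.var j))
          (hliftArr hBc) (hsubArr hBc) (fun j C' h => Ty.noConfusion h) hr ρ rfl
        cases k with
        | zero =>
            injection hk with hk1 hk2
            subst he hP1
            exact Or.inr ⟨v, ρ+m, rfl, hk1, by rw [hk2, Nat.add_zero], hnv, hv1⟩
        | succ k' => cases hk
      · exfalso
        subst hQ1
        obtain ⟨k, hk⟩ := reachL_shape (s := Ty.var) hliftVar hsubVar
          (fun j C' h => Ty.noConfusion h) hr ρ rfl
        cases k with
        | zero => cases hk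
        | succ k' => cases hk

theorem main_and (hA : IsOutputType A) (hB : IsOutputType B) :
    ∀ t, IsNormal t → TypF [tyO] t (tyAnd A B) → ¬ FreeIn 0 t := by
  obtain ⟨hAc, hAo, hAmain⟩ := hA
  obtain ⟨hBc, hBo, hBmain⟩ := hB
  intro t hnt hty hf
  have hnm := nm_of_isNormal t hnt
  have e : tyAnd A B = .all (.arr (.arr A (.arr B (.var 0))) (.var 0)) := by
    show Ty.all (.arr (.arr (liftTy 1 0 A) (.arr (liftTy 1 0 B) (.var 0))) (.var 0)) = _
    rw [hAc.liftEq, hBc.liftEq]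
  rw [e] at hty
  have h1 : TypF [tyO] t (.arr (.arr A (.arr B (.var 0))) (.var 0)) := by
    have h0 := TypF.allE (.var 0) hty
    have e2 : substTy (Ty.arr (.arr A (.arr B (.var 0))) (.var 0)) 0 (.var 0) =
        .arr (.arr A (.arr B (.var 0))) (.var 0) := by
      have ev : substTy (Ty.var 0) 0 (.var 0) = .var 0 := by
        show (if (0:ℕ) < 0 then Ty.var 0 else if (0:ℕ) = 0 then liftTy 0 0 (.var 0) else .var (0-1)) = _
        simp [liftTy_zero]
      show Ty.arr (.arr (substTy A 0 _) (.arr (substTy B 0 _) (substTy (.var 0) 0 _))) (substTy (.var 0) 0 _) = _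
      rw [hAc.substEq, hBc.substEq, ev]
    rw [e2] at h0
    exact h0
  cases t with
  | var n => exact no_arrow_O _ (Neu.var n) [tyO] hO1 _ _ h1
  | app u v =>
      have hne : Neu (.app u v) := by cases hnm with | neu h => exact h
      exact no_arrow_O _ hne [tyO] hO1 _ _ h1
  | lam M =>
      obtain ⟨m, P, Q, hM, hr⟩ := typF_lamGen h1 M rfl
      have hctxO : liftCtxN m [tyO] = [tyO] := by
        rw [liftCtxN_cons, liftCtxN_nil, tlift_closed tyO_closed]
      rw [hctxO] at hM
      obtain ⟨k, σ, hσ, hC⟩ := reachL_arr_inst hr P Q rfl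
      cases k with
      | succ k' => cases hC
      | zero =>
          have hC' : Ty.arr (.arr A (.arr B (.var 0))) (.var 0) = .arr (msubstTy σ P) (msubstTy σ Q) := hC
          injection hC' with hC1 hC2
          have hM2 := typF_msubst hM σ
          simp only [List.map] at hM2
          rw [← hC1, ← hC2] at hM2
          have hM3 : TypF [.arr A (.arr B (.var 0)), tyO] M (.var 0) := hM2
          have hfM : FreeIn 1 M := hf
          have hnM : Nm M := nm_lam_inv hnm
          clear hM2 hM hr hty h1
          cases M with
          | var n =>
              obtain ⟨T, hT, hv⟩ := typF_varGen hM3 n rfl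
              match n, hT with
              | 0, hT =>
                  simp only [List.getElem?_cons_zero, Option.some.injEq] at hT
                  subst hT
                  obtain ⟨k, hk⟩ := varTy_shape (s := fun j => Ty.arr A (.arr B (.var j)))
                    (hliftAnd hAc hBc) (hsubAnd hAc hBc) (fun j C' h => Ty.noConfusion h) hv 0 rfl
                  cases k with
                  | zero => cases hk
                  | succ k' => cases hk
              | 1, hT =>
                  simp only [List.getElem?_cons_succ, List.getElem?_cons_zero, Option.some.injEq] at hT
                  subst hT
                  obtain ⟨k, hk⟩ := varTy_closed tyO_closed (fun C' h => Ty.noConfusion h) hv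
                  cases k with
                  | zero => cases hk
                  | succ k' => cases hk
              | (n+2), hT => simp at hT
          | lam b =>
              obtain ⟨m2, P2, Q2, hb, hr2⟩ := typF_lamGen hM3 b rfl
              obtain ⟨k, σ2, hσ2, hC2⟩ := reachL_arr_inst hr2 P2 Q2 rfl
              cases k with
              | zero => cases hC2
              | succ k' => cases hC2
          | app u v =>
              have hneM : Neu (.app u v) := by cases hnM with | neu h => exact h
              obtain ⟨hnu, hnv⟩ := neu_app_inv hneM
              obtain ⟨m1, P1, Q1, hu, hv, hr1⟩ := typF_appGen hM3 u v rfl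
              have hctx : liftCtxN m1 [Ty.arr A (.arr B (.var 0)), tyO] = [.arr A (.arr B (.var m1)), tyO] := by
                rw [liftCtxN_cons, liftCtxN_cons, liftCtxN_nil, tlift_closed tyO_closed,
                  tlift_shape (hliftAnd hAc hBc) m1 0, Nat.zero_add]
              rw [hctx] at hu hv
              rcases spine_and hAc hBc u hnu m1 P1 Q1 hu with ⟨he, hP1, hQ1⟩ | ⟨a, ρ', he, hP1, hQ1, hna, hta⟩
              · subst hQ1
                obtain ⟨k, hk⟩ := reachL_shape (s := fun j => Ty.arr B (.var j))
                  (hliftArr hBc) (hsubArr hBc) (fun j C' h => Ty.noConfusion h) hr1 0 (by rw [Nat.zero_add])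
                cases k with
                | zero => cases hk
                | succ k' => cases hk
              · subst he
                have hfM' : FreeIn 1 a ∨ FreeIn 1 v := by
                  rcases hfM with (h | h) | h
                  · cases h
                  · exact Or.inl h
                  · exact Or.inr h
                rcases hfM' with h | h
                · exact kill_and hAc hBc ⟨hAc, hAo, hAmain⟩ hna hta h
                · subst hP1
                  exact kill_and hAc hBc ⟨hBc, hBo, hBmain⟩ hnv hv h

end MainAnd
section MainOr

variable {A B : Ty}

theorem kill_or {B1 B2 S : Ty} (h1 : TyClosed B1) (h2 : TyClosed B2) (hS : IsOutputType S)
    {x : Trm} {ρ : ℕ} (hx : Nm x)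
    (hty : TypF [.arr B1 (.var ρ), .arr B2 (.var ρ), tyO] x S) : ¬ FreeIn 2 x := by
  intro hfx
  have hτ := typF_msubst hty (fun n => if n = ρ then tyO else .var n)
  have e1 : msubstTy (fun n => if n = ρ then tyO else .var n) (Ty.arr B1 (.var ρ)) = .arr B1 tyO := by
    show Ty.arr (msubstTy _ B1) (if ρ = ρ then tyO else .var ρ) = _
    rw [h1.msubstEq, if_pos rfl]
  have e2 : msubstTy (fun n => if n = ρ then tyO else .var n) (Ty.arr B2 (.var ρ)) = .arr B2 tyO := by
    show Ty.arr (msubstTy _ B2) (if ρ = ρ then tyO else .var ρ) = _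
    rw [h2.msubstEq, if_pos rfl]
  have e3 : msubstTy (fun n => if n = ρ then tyO else .var n) S = S := hS.1.msubstEq _
  simp only [List.map] at hτ
  rw [e1, e2, e3] at hτ
  have hτ' : TypF ([Ty.arr B1 tyO] ++ (mkArr [B2] tyO) :: tyO :: []) x S := hτ
  have hphi1 := phiA_typ hτ' [.arr B1 tyO] [B2] [] rfl (by
    intro D hD
    simp only [List.mem_singleton] at hD
    subst hD; exact h2)
  have hτ'' : TypF ([] ++ (mkArr [B1] tyO) :: tyO :: []) (phiA 1 1 x) S := hphi1
  have hphi2 := phiA_typ hτ'' [] [B1] [] rfl (by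
    intro D hD
    simp only [List.mem_singleton] at hD
    subst hD; exact h1)
  have hnp : Nm (phiA 1 0 (phiA 1 1 x)) := phiA_nm (by omega) (phiA_nm (by omega) hx)
  have := hS.2.2 _ (isNormal_of_nm hnp) hphi2
  exact this (phiA_free _ 1 0 (Or.inr (phiA_free x 1 1 (Or.inr hfx))))

/-- spine analysis in the context `[A → X, O]` -/
theorem spine_single (hAc : TyClosed A) : ∀ u, Neu u → ∀ (c : ℕ) (P Q : Ty),
    TypF [.arr A (.var c), tyO] u (.arr P Q) →
    u = .var 0 ∧ P = A ∧ Q = .var c := by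
  intro u
  induction u with
  | var n =>
      intro _ c P Q hty
      obtain ⟨T, hT, hv⟩ := typF_varGen hty n rfl
      match n, hT with
      | 0, hT =>
          simp only [List.getElem?_cons_zero, Option.some.injEq] at hT
          subst hT
          obtain ⟨k, hk⟩ := varTy_shape (s := fun j => Ty.arr A (.var j))
            (hliftArr hAc) (hsubArr hAc) (fun j C' h => Ty.noConfusion h) hv c rfl
          cases k with
          | zero =>
              injection hk with hk1 hk2
              exact ⟨rfl, hk1, by rw [hk2, Nat.add_zero]⟩
          | succ k' => cases hk
      | 1, hT =>
          simp only [List.getElem?_cons_succ, List.getElem?_cons_zero, Option.some.injEq] at hT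
          subst hT
          obtain ⟨k, hk⟩ := varTy_closed tyO_closed (fun C' h => Ty.noConfusion h) hv
          cases k with
          | zero => cases hk
          | succ k' => cases hk
      | (n+2), hT => simp at hT
  | lam b ih => intro hne; cases hne
  | app u1 v ih1 ih2 =>
      intro hne c P Q hty
      exfalso
      obtain ⟨hn1, hnv⟩ := neu_app_inv hne
      obtain ⟨m, P1, Q1, hu1, hv1, hr⟩ := typF_appGen hty u1 v rfl
      have hctx : liftCtxN m [Ty.arr A (.var c), tyO] = [.arr A (.var (c+m)), tyO] := by
        rw [liftCtxN_cons, liftCtxN_cons, liftCtxN_nil, tlift_closed tyO_closed,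
          tlift_shape (hliftArr hAc) m c]
      rw [hctx] at hu1
      obtain ⟨he, hP1, hQ1⟩ := ih1 hn1 (c+m) P1 Q1 hu1
      subst hQ1
      obtain ⟨k, hk⟩ := reachL_shape (s := Ty.var) hliftVar hsubVar
        (fun j C' h => Ty.noConfusion h) hr c rfl
      cases k with
      | zero => cases hk
      | succ k' => cases hk

/-- spine analysis in the disjunction context -/
theorem spine_or (hAc : TyClosed A) (hBc : TyClosed B) : ∀ u, Neu u → ∀ (c : ℕ) (P Q : Ty),
    TypF [.arr B (.var c), .arr A (.var c), tyO] u (.arr P Q) →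
    (u = .var 0 ∧ P = B ∧ Q = .var c) ∨ (u = .var 1 ∧ P = A ∧ Q = .var c) := by
  intro u
  induction u with
  | var n =>
      intro _ c P Q hty
      obtain ⟨T, hT, hv⟩ := typF_varGen hty n rfl
      match n, hT with
      | 0, hT =>
          simp only [List.getElem?_cons_zero, Option.some.injEq] at hT
          subst hT
          obtain ⟨k, hk⟩ := varTy_shape (s := fun j => Ty.arr B (.var j))
            (hliftArr hBc) (hsubArr hBc) (fun j C' h => Ty.noConfusion h) hv c rfl
          cases k with
          | zero =>
              injection hk with hk1 hk2
              exact Or.inl ⟨rfl, hk1, by rw [hk2, Nat.add_zero]⟩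
          | succ k' => cases hk
      | 1, hT =>
          simp only [List.getElem?_cons_succ, List.getElem?_cons_zero, Option.some.injEq] at hT
          subst hT
          obtain ⟨k, hk⟩ := varTy_shape (s := fun j => Ty.arr A (.var j))
            (hliftArr hAc) (hsubArr hAc) (fun j C' h => Ty.noConfusion h) hv c rfl
          cases k with
          | zero =>
              injection hk with hk1 hk2
              exact Or.inr ⟨rfl, hk1, by rw [hk2, Nat.add_zero]⟩
          | succ k' => cases hk
      | 2, hT =>
          simp only [List.getElem?_cons_succ, List.getElem?_cons_zero, Option.some.injEq] at hT
          subst hT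
          obtain ⟨k, hk⟩ := varTy_closed tyO_closed (fun C' h => Ty.noConfusion h) hv
          cases k with
          | zero => cases hk
          | succ k' => cases hk
      | (n+3), hT => simp at hT
  | lam b ih => intro hne; cases hne
  | app u1 v ih1 ih2 =>
      intro hne c P Q hty
      exfalso
      obtain ⟨hn1, hnv⟩ := neu_app_inv hne
      obtain ⟨m, P1, Q1, hu1, hv1, hr⟩ := typF_appGen hty u1 v rfl
      have hctx : liftCtxN m [Ty.arr B (.var c), Ty.arr A (.var c), tyO]
          = [.arr B (.var (c+m)), .arr A (.var (c+m)), tyO] := by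
        rw [liftCtxN_cons, liftCtxN_cons, liftCtxN_cons, liftCtxN_nil, tlift_closed tyO_closed,
          tlift_shape (hliftArr hAc) m c, tlift_shape (hliftArr hBc) m c]
      rw [hctx] at hu1
      have hQ1 : Q1 = .var (c+m) := by
        rcases ih1 hn1 (c+m) P1 Q1 hu1 with ⟨_, _, h⟩ | ⟨_, _, h⟩ <;> exact h
      subst hQ1
      obtain ⟨k, hk⟩ := reachL_shape (s := Ty.var) hliftVar hsubVar
        (fun j C' h => Ty.noConfusion h) hr c rfl
      cases k with
      | zero => cases hk
      | succ k' => cases hk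

theorem main_or (hA : IsOutputType A) (hB : IsOutputType B) :
    ∀ t, IsNormal t → TypF [tyO] t (tyOr A B) → ¬ FreeIn 0 t := by
  obtain ⟨hAc, hAo, hAmain⟩ := hA
  obtain ⟨hBc, hBo, hBmain⟩ := hB
  intro t hnt hty hf
  have hnm := nm_of_isNormal t hnt
  have e : tyOr A B = .all (.arr (.arr A (.var 0)) (.arr (.arr B (.var 0)) (.var 0))) := by
    show Ty.all (.arr (.arr (liftTy 1 0 A) (.var 0)) (.arr (.arr (liftTy 1 0 B) (.var 0)) (.var 0))) = _
    rw [hAc.liftEq, hBc.liftEq]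
  rw [e] at hty
  have ev : substTy (Ty.var 0) 0 (.var 0) = .var 0 := by
    show (if (0:ℕ) < 0 then Ty.var 0 else if (0:ℕ) = 0 then liftTy 0 0 (.var 0) else .var (0-1)) = _
    simp [liftTy_zero]
  have h1 : TypF [tyO] t (.arr (.arr A (.var 0)) (.arr (.arr B (.var 0)) (.var 0))) := by
    have h0 := TypF.allE (.var 0) hty
    have e2 : substTy (Ty.arr (.arr A (.var 0)) (.arr (.arr B (.var 0)) (.var 0))) 0 (.var 0) =
        .arr (.arr A (.var 0)) (.arr (.arr B (.var 0)) (.var 0)) := by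
      show Ty.arr (.arr (substTy A 0 _) (substTy (.var 0) 0 _))
        (.arr (.arr (substTy B 0 _) (substTy (.var 0) 0 _)) (substTy (.var 0) 0 _)) = _
      rw [hAc.substEq, hBc.substEq, ev]
    rw [e2] at h0
    exact h0
  cases t with
  | var n => exact no_arrow_O _ (Neu.var n) [tyO] hO1 _ _ h1
  | app u v =>
      have hne : Neu (.app u v) := by cases hnm with | neu h => exact h
      exact no_arrow_O _ hne [tyO] hO1 _ _ h1
  | lam M1 =>
      obtain ⟨m, P, Q, hM, hr⟩ := typF_lamGen h1 M1 rfl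
      have hctxO : liftCtxN m [tyO] = [tyO] := by
        rw [liftCtxN_cons, liftCtxN_nil, tlift_closed tyO_closed]
      rw [hctxO] at hM
      obtain ⟨k, σ, hσ, hC⟩ := reachL_arr_inst hr P Q rfl
      cases k with
      | succ k' => cases hC
      | zero =>
          have hC' : Ty.arr (.arr A (.var 0)) (.arr (.arr B (.var 0)) (.var 0)) = .arr (msubstTy σ P) (msubstTy σ Q) := hC
          injection hC' with hC1 hC2
          have hM2 := typF_msubst hM σ
          simp only [List.map] at hM2
          rw [← hC1, ← hC2] at hM2
          have hM3 : TypF [.arr A (.var 0), tyO] M1 (.arr (.arr B (.var 0)) (.var 0)) := hM2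
          have hnM : Nm M1 := nm_lam_inv hnm
          clear hM2 hM hr hty h1
          cases M1 with
          | var n =>
              obtain ⟨T, hT, hv⟩ := typF_varGen hM3 n rfl
              match n, hT with
              | 0, hT =>
                  simp only [List.getElem?_cons_zero, Option.some.injEq] at hT
                  subst hT
                  obtain ⟨k, hk⟩ := varTy_shape (s := fun j => Ty.arr A (.var j))
                    (hliftArr hAc) (hsubArr hAc) (fun j C' h => Ty.noConfusion h) hv 0 rfl
                  cases k with
                  | zero =>
                      injection hk with hk1 hk2
                      exact hAc 0 (by rw [← hk1]; exact Or.inr rfl)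
                  | succ k' => cases hk
              | 1, hT =>
                  simp only [List.getElem?_cons_succ, List.getElem?_cons_zero, Option.some.injEq] at hT
                  subst hT
                  obtain ⟨k, hk⟩ := varTy_closed tyO_closed (fun C' h => Ty.noConfusion h) hv
                  cases k with
                  | zero => cases hk
                  | succ k' => cases hk
              | (n+2), hT => simp at hT
          | app u v =>
              have hne : Neu (.app u v) := by cases hnM with | neu h => exact h
              obtain ⟨hnu, hnv⟩ := neu_app_inv hne
              obtain ⟨m1, P1, Q1, hu, hv, hr1⟩ := typF_appGen hM3 u v rfl
              have hctx : liftCtxN m1 [Ty.arr A (.var 0), tyO] = [.arr A (.var m1), tyO] := by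
                rw [liftCtxN_cons, liftCtxN_cons, liftCtxN_nil, tlift_closed tyO_closed,
                  tlift_shape (hliftArr hAc) m1 0, Nat.zero_add]
              rw [hctx] at hu
              obtain ⟨he, hP1, hQ1⟩ := spine_single hAc u hnu m1 P1 Q1 hu
              subst hQ1
              obtain ⟨k, hk⟩ := reachL_shape (s := Ty.var) hliftVar hsubVar
                (fun j C' h => Ty.noConfusion h) hr1 0 (by rw [Nat.zero_add])
              cases k with
              | zero => cases hk
              | succ k' => cases hk
          | lam M2 =>
              obtain ⟨m2, P2, Q2, hM2', hr2⟩ := typF_lamGen hM3 M2 rfl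
              have hctx2 : liftCtxN m2 [Ty.arr A (.var 0), tyO] = [.arr A (.var m2), tyO] := by
                rw [liftCtxN_cons, liftCtxN_cons, liftCtxN_nil, tlift_closed tyO_closed,
                  tlift_shape (hliftArr hAc) m2 0, Nat.zero_add]
              rw [hctx2] at hM2'
              obtain ⟨k, σ2, hσ2, hC2⟩ := reachL_arr_inst hr2 P2 Q2 rfl
              cases k with
              | succ k' => cases hC2
              | zero =>
                  have hC2' : Ty.arr (.arr B (.var 0)) (.var 0) = .arr (msubstTy σ2 P2) (msubstTy σ2 Q2) := hC2
                  injection hC2' with hD1 hD2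
                  have hM4 := typF_msubst hM2' σ2
                  simp only [List.map] at hM4
                  rw [← hD1, ← hD2] at hM4
                  have hσ2' : msubstTy σ2 (Ty.var m2) = .var 0 := by
                    show σ2 m2 = Ty.var 0
                    have := hσ2 0
                    rw [Nat.zero_add] at this
                    rw [this]
                  rw [show msubstTy σ2 (Ty.arr A (.var m2)) = Ty.arr (msubstTy σ2 A) (msubstTy σ2 (.var m2)) from rfl] at hM4
                  rw [hσ2', hAc.msubstEq] at hM4
                  have hM5 : TypF [.arr B (.var 0), .arr A (.var 0), tyO] M2 (.var 0) := hM4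
                  have hfM2 : FreeIn 2 M2 := hf
                  have hnM2 : Nm M2 := nm_lam_inv hnM
                  clear hM4 hM2' hr2 hC2 hM3
                  cases M2 with
                  | var n =>
                      obtain ⟨T, hT, hv⟩ := typF_varGen hM5 n rfl
                      match n, hT, hfM2 with
                      | 2, hT, _ =>
                          simp only [List.getElem?_cons_succ, List.getElem?_cons_zero, Option.some.injEq] at hT
                          subst hT
                          obtain ⟨k, hk⟩ := varTy_closed tyO_closed (fun C' h => Ty.noConfusion h) hv
                          cases k with
                          | zero => cases hk
                          | succ k' => cases hk
                  | lam b =>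
                      obtain ⟨m3, P3, Q3, hb, hr3⟩ := typF_lamGen hM5 b rfl
                      obtain ⟨k, σ3, hσ3, hC3⟩ := reachL_arr_inst hr3 P3 Q3 rfl
                      cases k with
                      | zero => cases hC3
                      | succ k' => cases hC3
                  | app u v =>
                      have hne : Neu (.app u v) := by cases hnM2 with | neu h => exact h
                      obtain ⟨hnu, hnv⟩ := neu_app_inv hne
                      obtain ⟨m1, P1, Q1, hu, hv, hr1⟩ := typF_appGen hM5 u v rfl
                      have hctx : liftCtxN m1 [Ty.arr B (.var 0), Ty.arr A (.var 0), tyO]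
                          = [.arr B (.var m1), .arr A (.var m1), tyO] := by
                        rw [liftCtxN_cons, liftCtxN_cons, liftCtxN_cons, liftCtxN_nil, tlift_closed tyO_closed,
                          tlift_shape (hliftArr hAc) m1 0, tlift_shape (hliftArr hBc) m1 0, Nat.zero_add]
                      rw [hctx] at hu hv
                      rcases spine_or hAc hBc u hnu m1 P1 Q1 hu with ⟨he, hP1, _⟩ | ⟨he, hP1, _⟩
                      · subst he hP1
                        have hfv : FreeIn 2 v := by
                          rcases hfM2 with h | h
                          · cases h
                          · exact h
                        exact kill_or hBc hAc ⟨hBc, hBo, hBmain⟩ hnv hv hfv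
                      · subst he hP1
                        have hfv : FreeIn 2 v := by
                          rcases hfM2 with h | h
                          · cases h
                          · exact h
                        exact kill_or hBc hAc ⟨hAc, hAo, hAmain⟩ hnv hv hfv

end MainOr
section MainList

variable {A : Ty}

theorem hliftList (hAc : TyClosed A) :
    ∀ j, liftTy 1 0 (.arr A (.arr (.var j) (.var j))) = .arr A (.arr (.var (j+1)) (.var (j+1))) := by
  intro j
  show Ty.arr (liftTy 1 0 A) (.arr (liftTy 1 0 (.var j)) (liftTy 1 0 (.var j))) = _
  rw [hAc.liftEq, liftTy_var0]

theorem hsubList (hAc : TyClosed A) :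
    ∀ j k G, substTy (.arr A (.arr (.var (j+k+1)) (.var (j+k+1)))) k G = .arr A (.arr (.var (j+k)) (.var (j+k))) := by
  intro j k G
  show Ty.arr (substTy A k G) (.arr (substTy (.var (j+k+1)) k G) (substTy (.var (j+k+1)) k G)) = _
  rw [hAc.substEq, substTy_var_gt (by omega) G]
  have e : j + k + 1 - 1 = j + k := by omega
  rw [e]

theorem hliftVV : ∀ j : ℕ, liftTy 1 0 (Ty.arr (.var j) (.var j)) = .arr (.var (j+1)) (.var (j+1)) := by
  intro j
  show Ty.arr (liftTy 1 0 (.var j)) (liftTy 1 0 (.var j)) = _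
  rw [liftTy_var0]

theorem hsubVV : ∀ (j k : ℕ) (G : Ty), substTy (Ty.arr (.var (j+k+1)) (.var (j+k+1))) k G = .arr (.var (j+k)) (.var (j+k)) := by
  intro j k G
  show Ty.arr (substTy (.var (j+k+1)) k G) (substTy (.var (j+k+1)) k G) = _
  rw [substTy_var_gt (by omega) G]
  have e : j + k + 1 - 1 = j + k := by omega
  rw [e]

theorem kill_list {A1 S : Ty} (h1 : TyClosed A1) (hS : IsOutputType S)
    {a : Trm} {ρ : ℕ} (ha : Nm a)
    (hty : TypF [.arr A1 (.arr (.var ρ) (.var ρ)), .var ρ, tyO] a S) : ¬ FreeIn 2 a := by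
  intro hfa
  have hτ := typF_msubst hty (fun n => if n = ρ then tyO else .var n)
  have e1 : msubstTy (fun n => if n = ρ then tyO else .var n) (Ty.arr A1 (.arr (.var ρ) (.var ρ))) = .arr A1 (.arr tyO tyO) := by
    show Ty.arr (msubstTy _ A1) (.arr (if ρ = ρ then tyO else .var ρ) (if ρ = ρ then tyO else .var ρ)) = _
    rw [h1.msubstEq, if_pos rfl]
  have e2 : msubstTy (fun n => if n = ρ then tyO else .var n) (Ty.var ρ) = tyO := by
    show (if ρ = ρ then tyO else Ty.var ρ) = _
    rw [if_pos rfl]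
  have e3 : msubstTy (fun n => if n = ρ then tyO else .var n) S = S := hS.1.msubstEq _
  simp only [List.map] at hτ
  rw [e1, e2, e3] at hτ
  have hτ' : TypF ([Ty.arr A1 (.arr tyO tyO)] ++ (mkArr [] tyO) :: tyO :: []) a S := hτ
  have hphi1 := phiA_typ hτ' [.arr A1 (.arr tyO tyO)] [] [] rfl (by intro D hD; simp at hD)
  have hτ'' : TypF ([] ++ (mkArr [A1, tyO] tyO) :: tyO :: []) (phiA 0 1 a) S := hphi1
  have hphi2 := phiA_typ hτ'' [] [A1, tyO] [] rfl (by
    intro D hD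
    simp only [List.mem_cons, List.not_mem_nil, or_false] at hD
    rcases hD with rfl | rfl
    · exact h1
    · exact tyO_closed)
  have hnp : Nm (phiA 2 0 (phiA 0 1 a)) := phiA_nm (by omega) (phiA_nm (by omega) ha)
  have := hS.2.2 _ (isNormal_of_nm hnp) hphi2
  exact this (phiA_free _ 2 0 (Or.inr (phiA_free a 0 1 (Or.inr hfa))))

/-- no neutral term has an arrow type in the context `[X, O]` -/
theorem spine_var0 : ∀ u, Neu u → ∀ (c : ℕ) (P Q : Ty),
    TypF [Ty.var c, tyO] u (.arr P Q) → False := by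
  intro u
  induction u with
  | var n =>
      intro _ c P Q hty
      obtain ⟨T, hT, hv⟩ := typF_varGen hty n rfl
      match n, hT with
      | 0, hT =>
          simp only [List.getElem?_cons_zero, Option.some.injEq] at hT
          subst hT
          obtain ⟨k, hk⟩ := varTy_shape (s := Ty.var) hliftVar hsubVar
            (fun j C' h => Ty.noConfusion h) hv c rfl
          cases k with
          | zero => cases hk
          | succ k' => cases hk
      | 1, hT =>
          simp only [List.getElem?_cons_succ, List.getElem?_cons_zero, Option.some.injEq] at hT
          subst hT
          obtain ⟨k, hk⟩ := varTy_closed tyO_closed (fun C' h => Ty.noConfusion h) hv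
          cases k with
          | zero => cases hk
          | succ k' => cases hk
      | (n+2), hT => simp at hT
  | lam b ih => intro hne; cases hne
  | app u1 v ih1 ih2 =>
      intro hne c P Q hty
      obtain ⟨hn1, hnv⟩ := neu_app_inv hne
      obtain ⟨m, P1, Q1, hu1, hv1, hr⟩ := typF_appGen hty u1 v rfl
      have hctx : liftCtxN m [Ty.var c, tyO] = [Ty.var (c+m), tyO] := by
        rw [liftCtxN_cons, liftCtxN_cons, liftCtxN_nil, tlift_closed tyO_closed,
          tlift_shape hliftVar m c]
      rw [hctx] at hu1
      exact ih1 hn1 (c+m) P1 Q1 hu1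

/-- spine analysis in the list context -/
theorem spine_list (hAc : TyClosed A) : ∀ u, Neu u → ∀ (c : ℕ) (P Q : Ty),
    TypF [.arr A (.arr (.var c) (.var c)), .var c, tyO] u (.arr P Q) →
    (u = .var 0 ∧ P = A ∧ Q = .arr (.var c) (.var c)) ∨
    (∃ a c', u = .app (.var 0) a ∧ P = .var c ∧ Q = .var c ∧ Nm a ∧
      TypF [.arr A (.arr (.var c') (.var c')), .var c', tyO] a A) := by
  intro u
  induction u with
  | var n =>
      intro _ c P Q hty
      obtain ⟨T, hT, hv⟩ := typF_varGen hty n rfl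
      match n, hT with
      | 0, hT =>
          simp only [List.getElem?_cons_zero, Option.some.injEq] at hT
          subst hT
          obtain ⟨k, hk⟩ := varTy_shape (s := fun j => Ty.arr A (.arr (.var j) (.var j)))
            (hliftList hAc) (hsubList hAc) (fun j C' h => Ty.noConfusion h) hv c rfl
          cases k with
          | zero =>
              injection hk with hk1 hk2
              exact Or.inl ⟨rfl, hk1, by rw [hk2, Nat.add_zero]⟩
          | succ k' => cases hk
      | 1, hT =>
          simp only [List.getElem?_cons_succ, List.getElem?_cons_zero, Option.some.injEq] at hT
          subst hT
          obtain ⟨k, hk⟩ := varTy_shape (s := Ty.var) hliftVar hsubVar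
            (fun j C' h => Ty.noConfusion h) hv c rfl
          cases k with
          | zero => cases hk
          | succ k' => cases hk
      | 2, hT =>
          simp only [List.getElem?_cons_succ, List.getElem?_cons_zero, Option.some.injEq] at hT
          subst hT
          obtain ⟨k, hk⟩ := varTy_closed tyO_closed (fun C' h => Ty.noConfusion h) hv
          cases k with
          | zero => cases hk
          | succ k' => cases hk
      | (n+3), hT => simp at hT
  | lam b ih => intro hne; cases hne
  | app u1 v ih1 ih2 =>
      intro hne c P Q hty
      obtain ⟨hn1, hnv⟩ := neu_app_inv hne
      obtain ⟨m, P1, Q1, hu1, hv1, hr⟩ := typF_appGen hty u1 v rfl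
      have hctx : liftCtxN m [Ty.arr A (.arr (.var c) (.var c)), Ty.var c, tyO]
          = [.arr A (.arr (.var (c+m)) (.var (c+m))), .var (c+m), tyO] := by
        rw [liftCtxN_cons, liftCtxN_cons, liftCtxN_cons, liftCtxN_nil, tlift_closed tyO_closed,
          tlift_shape (hliftList hAc) m c, tlift_shape hliftVar m c]
      rw [hctx] at hu1 hv1
      rcases ih1 hn1 (c+m) P1 Q1 hu1 with ⟨he, hP1, hQ1⟩ | ⟨a, c', he, hP1, hQ1, hna, hta⟩
      · subst hQ1
        obtain ⟨k, hk⟩ := reachL_shape (s := fun j => Ty.arr (.var j) (.var j))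
          hliftVV hsubVV (fun j C' h => Ty.noConfusion h) hr c rfl
        cases k with
        | zero =>
            injection hk with hk1 hk2
            subst he hP1
            exact Or.inr ⟨v, c+m, rfl, hk1, by rw [hk2, Nat.add_zero], hnv, hv1⟩
        | succ k' => cases hk
      · exfalso
        subst hQ1
        obtain ⟨k, hk⟩ := reachL_shape (s := Ty.var) hliftVar hsubVar
          (fun j C' h => Ty.noConfusion h) hr c rfl
        cases k with
        | zero => cases hk
        | succ k' => cases hk

theorem list_rec (hAc : TyClosed A) (hAo : ¬ ContainsConst 0 A)
    (hAmain : ∀ t, IsNormal t → TypF [tyO] t A → ¬ FreeIn 0 t) :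
    ∀ w, Nm w → ∀ (ρ : ℕ), TypF [.arr A (.arr (.var ρ) (.var ρ)), .var ρ, tyO] w (.var ρ) →
    ¬ FreeIn 2 w := by
  intro w
  induction w with
  | var n =>
      intro _ ρ hty hf
      have hn : n = 2 := hf
      subst hn
      obtain ⟨T, hT, hv⟩ := typF_varGen hty 2 rfl
      simp only [List.getElem?_cons_succ, List.getElem?_cons_zero, Option.some.injEq] at hT
      subst hT
      obtain ⟨k, hk⟩ := varTy_closed tyO_closed (fun C' h => Ty.noConfusion h) hv
      cases k with
      | zero => cases hk
      | succ k' => cases hk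
  | lam b ih =>
      intro _ ρ hty _
      obtain ⟨m, P, Q, hb, hr⟩ := typF_lamGen hty b rfl
      obtain ⟨k, σ, hσ, hC⟩ := reachL_arr_inst hr P Q rfl
      cases k with
      | zero => cases hC
      | succ k' => cases hC
  | app u v ihu ihv =>
      intro hnm ρ hty hf
      have hne : Neu (.app u v) := by cases hnm with | neu h => exact h
      obtain ⟨hnu, hnv⟩ := neu_app_inv hne
      obtain ⟨m, P1, Q1, hu, hv, hr⟩ := typF_appGen hty u v rfl
      have hctx : liftCtxN m [Ty.arr A (.arr (.var ρ) (.var ρ)), Ty.var ρ, tyO]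
          = [.arr A (.arr (.var (ρ+m)) (.var (ρ+m))), .var (ρ+m), tyO] := by
        rw [liftCtxN_cons, liftCtxN_cons, liftCtxN_cons, liftCtxN_nil, tlift_closed tyO_closed,
          tlift_shape (hliftList hAc) m ρ, tlift_shape hliftVar m ρ]
      rw [hctx] at hu hv
      rcases spine_list hAc u hnu (ρ+m) P1 Q1 hu with ⟨he, hP1, hQ1⟩ | ⟨a, c', he, hP1, hQ1, hna, hta⟩
      · subst hQ1
        obtain ⟨k, hk⟩ := reachL_shape (s := fun j => Ty.arr (.var j) (.var j))
          hliftVV hsubVV (fun j C' h => Ty.noConfusion h) hr ρ rfl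
        cases k with
        | zero => cases hk
        | succ k' => cases hk
      · subst he hP1
        have hfv : ¬ FreeIn 2 v := ihv hnv (ρ+m) hv
        have hfa : ¬ FreeIn 2 a := kill_list hAc ⟨hAc, hAo, hAmain⟩ hna hta
        rcases hf with (h | h) | h
        · cases h
        · exact hfa h
        · exact hfv h

theorem main_list (hA : IsOutputType A) :
    ∀ t, IsNormal t → TypF [tyO] t (tyList A) → ¬ FreeIn 0 t := by
  obtain ⟨hAc, hAo, hAmain⟩ := hA
  intro t hnt hty hf
  have hnm := nm_of_isNormal t hnt
  have e : tyList A = .all (.arr (.var 0) (.arr (.arr A (.arr (.var 0) (.var 0))) (.var 0))) := by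
    show Ty.all (.arr (.var 0) (.arr (.arr (liftTy 1 0 A) (.arr (.var 0) (.var 0))) (.var 0))) = _
    rw [hAc.liftEq]
  rw [e] at hty
  have ev : substTy (Ty.var 0) 0 (.var 0) = .var 0 := by
    show (if (0:ℕ) < 0 then Ty.var 0 else if (0:ℕ) = 0 then liftTy 0 0 (.var 0) else .var (0-1)) = _
    simp [liftTy_zero]
  have h1 : TypF [tyO] t (.arr (.var 0) (.arr (.arr A (.arr (.var 0) (.var 0))) (.var 0))) := by
    have h0 := TypF.allE (.var 0) hty
    have e2 : substTy (Ty.arr (.var 0) (.arr (.arr A (.arr (.var 0) (.var 0))) (.var 0))) 0 (.var 0) =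
        .arr (.var 0) (.arr (.arr A (.arr (.var 0) (.var 0))) (.var 0)) := by
      show Ty.arr (substTy (.var 0) 0 _)
        (.arr (.arr (substTy A 0 _) (.arr (substTy (.var 0) 0 _) (substTy (.var 0) 0 _))) (substTy (.var 0) 0 _)) = _
      rw [hAc.substEq, ev]
    rw [e2] at h0
    exact h0
  cases t with
  | var n => exact no_arrow_O _ (Neu.var n) [tyO] hO1 _ _ h1
  | app u v =>
      have hne : Neu (.app u v) := by cases hnm with | neu h => exact h
      exact no_arrow_O _ hne [tyO] hO1 _ _ h1
  | lam M1 =>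
      obtain ⟨m, P, Q, hM, hr⟩ := typF_lamGen h1 M1 rfl
      have hctxO : liftCtxN m [tyO] = [tyO] := by
        rw [liftCtxN_cons, liftCtxN_nil, tlift_closed tyO_closed]
      rw [hctxO] at hM
      obtain ⟨k, σ, hσ, hC⟩ := reachL_arr_inst hr P Q rfl
      cases k with
      | succ k' => cases hC
      | zero =>
          have hC' : Ty.arr (.var 0) (.arr (.arr A (.arr (.var 0) (.var 0))) (.var 0)) = .arr (msubstTy σ P) (msubstTy σ Q) := hC
          injection hC' with hC1 hC2
          have hM2 := typF_msubst hM σ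
          simp only [List.map] at hM2
          rw [← hC1, ← hC2] at hM2
          have hM3 : TypF [.var 0, tyO] M1 (.arr (.arr A (.arr (.var 0) (.var 0))) (.var 0)) := hM2
          have hnM : Nm M1 := nm_lam_inv hnm
          clear hM2 hM hr hty h1
          cases M1 with
          | var n =>
              obtain ⟨T, hT, hv⟩ := typF_varGen hM3 n rfl
              match n, hT with
              | 0, hT =>
                  simp only [List.getElem?_cons_zero, Option.some.injEq] at hT
                  subst hT
                  obtain ⟨k, hk⟩ := varTy_shape (s := Ty.var) hliftVar hsubVar
                    (fun j C' h => Ty.noConfusion h) hv 0 rfl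
                  cases k with
                  | zero => cases hk
                  | succ k' => cases hk
              | 1, hT =>
                  simp only [List.getElem?_cons_succ, List.getElem?_cons_zero, Option.some.injEq] at hT
                  subst hT
                  obtain ⟨k, hk⟩ := varTy_closed tyO_closed (fun C' h => Ty.noConfusion h) hv
                  cases k with
                  | zero => cases hk
                  | succ k' => cases hk
              | (n+2), hT => simp at hT
          | app u v =>
              have hne : Neu (.app u v) := by cases hnM with | neu h => exact h
              obtain ⟨hnu, hnv⟩ := neu_app_inv hne
              obtain ⟨m1, P1, Q1, hu, hv, hr1⟩ := typF_appGen hM3 u v rfl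
              have hctx : liftCtxN m1 [Ty.var 0, tyO] = [Ty.var m1, tyO] := by
                rw [liftCtxN_cons, liftCtxN_cons, liftCtxN_nil, tlift_closed tyO_closed,
                  tlift_shape hliftVar m1 0, Nat.zero_add]
              rw [hctx] at hu
              exact spine_var0 u hnu m1 P1 Q1 hu
          | lam M2 =>
              obtain ⟨m2, P2, Q2, hM2', hr2⟩ := typF_lamGen hM3 M2 rfl
              have hctx2 : liftCtxN m2 [Ty.var 0, tyO] = [Ty.var m2, tyO] := by
                rw [liftCtxN_cons, liftCtxN_cons, liftCtxN_nil, tlift_closed tyO_closed,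
                  tlift_shape hliftVar m2 0, Nat.zero_add]
              rw [hctx2] at hM2'
              obtain ⟨k, σ2, hσ2, hC2⟩ := reachL_arr_inst hr2 P2 Q2 rfl
              cases k with
              | succ k' => cases hC2
              | zero =>
                  have hC2' : Ty.arr (.arr A (.arr (.var 0) (.var 0))) (.var 0) = .arr (msubstTy σ2 P2) (msubstTy σ2 Q2) := hC2
                  injection hC2' with hD1 hD2
                  have hM4 := typF_msubst hM2' σ2
                  simp only [List.map] at hM4
                  rw [← hD1, ← hD2] at hM4
                  have hσ2' : msubstTy σ2 (Ty.var m2) = .var 0 := by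
                    show σ2 m2 = Ty.var 0
                    have := hσ2 0
                    rw [Nat.zero_add] at this
                    rw [this]
                  rw [hσ2'] at hM4
                  have hM5 : TypF [.arr A (.arr (.var 0) (.var 0)), .var 0, tyO] M2 (.var 0) := hM4
                  have hfM2 : FreeIn 2 M2 := hf
                  have hnM2 : Nm M2 := nm_lam_inv hnM
                  exact list_rec hAc hAo hAmain M2 hnM2 0 hM5 hfM2

end MainList
section Assemble

variable {A B : Ty}

theorem tyAnd_eq (hAc : TyClosed A) (hBc : TyClosed B) :
    tyAnd A B = .all (.arr (.arr A (.arr B (.var 0))) (.var 0)) := by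
  show Ty.all (.arr (.arr (liftTy 1 0 A) (.arr (liftTy 1 0 B) (.var 0))) (.var 0)) = _
  rw [hAc.liftEq, hBc.liftEq]

theorem tyOr_eq (hAc : TyClosed A) (hBc : TyClosed B) :
    tyOr A B = .all (.arr (.arr A (.var 0)) (.arr (.arr B (.var 0)) (.var 0))) := by
  show Ty.all (.arr (.arr (liftTy 1 0 A) (.var 0)) (.arr (.arr (liftTy 1 0 B) (.var 0)) (.var 0))) = _
  rw [hAc.liftEq, hBc.liftEq]

theorem tyList_eq (hAc : TyClosed A) :
    tyList A = .all (.arr (.var 0) (.arr (.arr A (.arr (.var 0) (.var 0))) (.var 0))) := by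
  show Ty.all (.arr (.var 0) (.arr (.arr (liftTy 1 0 A) (.arr (.var 0) (.var 0))) (.var 0))) = _
  rw [hAc.liftEq]

theorem tyAnd_closed (hAc : TyClosed A) (hBc : TyClosed B) : TyClosed (tyAnd A B) := by
  intro k hk
  rw [tyAnd_eq hAc hBc] at hk
  simp only [TyFreeIn] at hk
  rcases hk with (h | (h | h)) | h
  · exact hAc _ h
  · exact hBc _ h
  · omega
  · omega

theorem tyOr_closed (hAc : TyClosed A) (hBc : TyClosed B) : TyClosed (tyOr A B) := by
  intro k hk
  rw [tyOr_eq hAc hBc] at hk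
  simp only [TyFreeIn] at hk
  rcases hk with (h | h) | ((h | h) | h)
  · exact hAc _ h
  · omega
  · exact hBc _ h
  · omega
  · omega

theorem tyList_closed (hAc : TyClosed A) : TyClosed (tyList A) := by
  intro k hk
  rw [tyList_eq hAc] at hk
  simp only [TyFreeIn] at hk
  rcases hk with h | ((h | (h | h)) | h)
  · omega
  · exact hAc _ h
  · omega
  · omega
  · omega

theorem tyAnd_noO (hAc : TyClosed A) (hBc : TyClosed B)
    (hAo : ¬ ContainsConst 0 A) (hBo : ¬ ContainsConst 0 B) : ¬ ContainsConst 0 (tyAnd A B) := by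
  intro h
  rw [tyAnd_eq hAc hBc] at h
  simp only [ContainsConst] at h
  rcases h with (h | (h | h)) | h
  · exact hAo h
  · exact hBo h
  · exact h
  · exact h

theorem tyOr_noO (hAc : TyClosed A) (hBc : TyClosed B)
    (hAo : ¬ ContainsConst 0 A) (hBo : ¬ ContainsConst 0 B) : ¬ ContainsConst 0 (tyOr A B) := by
  intro h
  rw [tyOr_eq hAc hBc] at h
  simp only [ContainsConst] at h
  rcases h with (h | h) | ((h | h) | h)
  · exact hAo h
  · exact h
  · exact hBo h
  · exact h
  · exact h

theorem tyList_noO (hAc : TyClosed A) (hAo : ¬ ContainsConst 0 A) : ¬ ContainsConst 0 (tyList A) := by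
  intro h
  rw [tyList_eq hAc] at h
  simp only [ContainsConst] at h
  rcases h with h | ((h | (h | h)) | h)
  · exact h
  · exact hAo h
  · exact h
  · exact h
  · exact h

end Assemble

/-- if `A` and `B` are output types, then `A ∧ B`, `A ∨ B`
and `LA` are output types. -/
theorem output_closed_under_and_or_list (A B : Ty)
    (hA : IsOutputType A) (hB : IsOutputType B) :
    IsOutputType (tyAnd A B) ∧ IsOutputType (tyOr A B) ∧
      IsOutputType (tyList A) := by
  have hAc := hA.1
  have hAo := hA.2.1
  have hBc := hB.1
  have hBo := hB.2.1
  exact ⟨⟨tyAnd_closed hAc hBc, tyAnd_noO hAc hBc hAo hBo, main_and hA hB⟩,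
    ⟨tyOr_closed hAc hBc, tyOr_noO hAc hBc hAo hBo, main_or hA hB⟩,
    ⟨tyList_closed hAc, tyList_noO hAc hAo, main_list hA⟩⟩

end FarkhNour
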